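/- Let n ≥ 2 and define ρ : PP_n^fd → D_n by ρ(a) = d_{coker(a)}. Then for all a,b ∈ PP_n^fd: (G1) aρ(a) = a; (G2) ρ(ρ(a)) = ρ(a); (G3) ρ(a)ρ(a) = ρ(a); (G4) ρ(a)ρ(b)ρ(a) = ρ(b)ρ(a); (G5) ρ(ρ(a)ρ(b)) = ρ(a)ρ(b); (G6) ρ(ab)ρ(b) = ρ(ab); (G7) ρ(ab) = ρ(ρ(a)b); (G8) ρ(a)b = bρ(ab). In particular, PP_n^fd with the unary operation ρ is a grrac monoid. -/

import Mathlib

open scoped Classical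

namespace PaperFDP

/-- Vertex set of a partition diagram: `inl x` is the upper vertex `x`,
`inr x` is the lower vertex `x'`. -/
abbrev V (n : ℕ) := Fin n ⊕ Fin n

/-- A partition in `P_n`: a set partition of the `2n` points, encoded as an
equivalence relation (a `Setoid`). -/
abbrev Ptn (n : ℕ) := Setoid (V n)

/-- Three-row vertex set (upper ⊕ (middle ⊕ lower)) used for the product graph. -/
abbrev W3 (n : ℕ) := Fin n ⊕ (Fin n ⊕ Fin n)

/-- Embedding of `a`'s vertices: upper row stays, lower row goes to the middle row. -/
def upMid {n : ℕ} : V n → W3 n :=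
  Sum.elim Sum.inl fun x => Sum.inr (Sum.inl x)

/-- Embedding of `b`'s vertices: upper row goes to the middle row, lower row stays. -/
def midLow {n : ℕ} : V n → W3 n :=
  Sum.elim (fun x => Sum.inr (Sum.inl x)) fun x => Sum.inr (Sum.inr x)

/-- Embedding of the outer (upper and lower) rows into the three-row vertex set. -/
def outer {n : ℕ} : V n → W3 n :=
  Sum.elim Sum.inl fun x => Sum.inr (Sum.inr x)

/-- The edge relation of the product graph `Π(a,b)`. -/
def joinRel {n : ℕ} (a b : Ptn n) (u v : W3 n) : Prop :=
  (∃ p q : V n, a.r p q ∧ upMid p = u ∧ upMid q = v) ∨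
  (∃ p q : V n, b.r p q ∧ midLow p = u ∧ midLow q = v)

/-- The product of two partitions: `x,y` lie in the same block of `a*b` iff they are
connected in the product graph. -/
def pmul {n : ℕ} (a b : Ptn n) : Ptn n :=
  Setoid.comap outer (Relation.EqvGen.setoid (joinRel a b))

/-- The identity partition, with blocks `{x, x'}`. -/
def onePtn (n : ℕ) : Ptn n := Setoid.ker (Sum.elim id id)

/-- The partition of a transformation `f` (written on the right): `x` is joined to `(x f)'`. -/
def toPtn {n : ℕ} (f : Fin n → Fin n) : Ptn n := Setoid.ker (Sum.elim f id)

/-- `id_ε`, the partition with blocks `A ∪ A'` for the `ε`-classes `A`. -/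
def idOf {n : ℕ} (ε : Setoid (Fin n)) : Ptn n := Setoid.comap (Sum.elim id id) ε

/-- The kernel of a partition. -/
def kerP {n : ℕ} (a : Ptn n) : Setoid (Fin n) := Setoid.comap Sum.inl a

/-- The cokernel of a partition. -/
def cokerP {n : ℕ} (a : Ptn n) : Setoid (Fin n) := Setoid.comap Sum.inr a

/-- `a` has full domain: every upper point is in a block meeting the lower row. -/
def FullDom {n : ℕ} (a : Ptn n) : Prop :=
  ∀ x : Fin n, ∃ y : Fin n, a.r (Sum.inl x) (Sum.inr y)

/-- The full-domain partition monoid `P_n^fd` as a subset of `P_n`. -/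
def Pfd (n : ℕ) : Set (Ptn n) := {a | FullDom a}

/-- `a` is (the partition of) a permutation, i.e. a unit of `P_n`. -/
def IsPermPtn {n : ℕ} (a : Ptn n) : Prop := ∃ g : Equiv.Perm (Fin n), a = toPtn ⇑g

/-- The singular ideal `Sing(P_n^fd) = P_n^fd ∖ S_n`. -/
def SingPfd (n : ℕ) : Set (Ptn n) := {a | FullDom a ∧ ¬ IsPermPtn a}

/-- The boundary linear order on the `2n` vertices: `1 < … < n < n' < … < 1'`. -/
def ordV {n : ℕ} : V n → ℕ :=
  Sum.elim (fun x => (x : ℕ)) fun x => 2 * n - 1 - (x : ℕ)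

/-- `a` is planar: it can be drawn without crossings, equivalently it is
non-crossing with respect to the boundary order on the `2n` vertices. -/
def Planar {n : ℕ} (a : Ptn n) : Prop :=
  ∀ p q r s : V n, ordV p < ordV q → ordV q < ordV r → ordV r < ordV s →
    a.r p r → a.r q s → a.r p q

/-- The planar full-domain partition monoid `PP_n^fd` as a subset of `P_n`. -/
def PPfd (n : ℕ) : Set (Ptn n) := {a | FullDom a ∧ Planar a}

/-- `η_ij`: the equivalence on `{1,…,n}` whose only nontrivial class is `{i,j}`. -/
def etaOf {n : ℕ} (i j : Fin n) : Setoid (Fin n) :=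
  Setoid.ker fun x => if x = j then i else x

/-- `ē_ij = id_{η_ij}`: the partition with block `{i,j,i',j'}` and blocks `{x,x'}` otherwise. -/
def ebar {n : ℕ} (i j : Fin n) : Ptn n := idOf (etaOf i j)

/-- `t̄_ij`: the transformation sending `j ↦ i` and fixing everything else, as a partition. -/
def tbar {n : ℕ} (i j : Fin n) : Ptn n := toPtn fun x => if x = j then i else x

/-- Evaluation of a word as a genuine (semi)group product of partitions
(the empty word evaluates to the identity partition). -/
def evalWith {A : Type*} {n : ℕ} (g : A → Ptn n) : List A → Ptn n
  | [] => onePtn n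
  | [x] => g x
  | x :: y :: w => pmul (g x) (evalWith g (y :: w))

/-- One-step rewriting using a relation from `R`, in an arbitrary context. -/
def OneStep {A : Type*} (R : List A → List A → Prop) (w w' : List A) : Prop :=
  ∃ u v p q : List A, R p q ∧ w = u ++ p ++ v ∧ w' = u ++ q ++ v

/-- The congruence on the free monoid (or free semigroup) generated by `R`. -/
def PresCong {A : Type*} (R : List A → List A → Prop) : List A → List A → Prop :=
  Relation.EqvGen (OneStep R)

end PaperFDP

namespace PaperFDP

/-- The `ε`-class of `x`, as a set. -/
def clsS {n : ℕ} (ε : Setoid (Fin n)) (x : Fin n) : Set (Fin n) := {y | ε.r x y}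

/-- Two sets are separated if one lies entirely below the other. -/
def SepSets {n : ℕ} (A B : Set (Fin n)) : Prop :=
  (∀ a ∈ A, ∀ b ∈ B, a < b) ∨ (∀ a ∈ A, ∀ b ∈ B, b < a)

/-- `A` is nested by `B`: all of `A` lies strictly between two consecutive elements of `B`. -/
def NestedBy {n : ℕ} (A B : Set (Fin n)) : Prop :=
  ∃ b₁ ∈ B, ∃ b₂ ∈ B, b₁ < b₂ ∧ (∀ b ∈ B, ¬ (b₁ < b ∧ b < b₂)) ∧
    ∀ a ∈ A, b₁ < a ∧ a < b₂

/-- An equivalence is planar if any two of its classes are nested or separated. -/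
def IsPlanarEq {n : ℕ} (ε : Setoid (Fin n)) : Prop :=
  ∀ x y : Fin n, ¬ ε.r x y →
    SepSets (clsS ε x) (clsS ε y) ∨ NestedBy (clsS ε x) (clsS ε y) ∨
      NestedBy (clsS ε y) (clsS ε x)

/-- The class of `x` is un-nested (nested by no other class). -/
def Unnested {n : ℕ} (ε : Setoid (Fin n)) (x : Fin n) : Prop :=
  ∀ y : Fin n, ¬ NestedBy (clsS ε x) (clsS ε y)

/-- The minimum of the `ε`-class of `x`. -/
noncomputable def minCl {n : ℕ} (ε : Setoid (Fin n)) (x : Fin n) : Fin n :=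
  (Finset.univ.filter fun y => ε.r x y).min'
    ⟨x, Finset.mem_filter.mpr ⟨Finset.mem_univ x, ε.iseqv.refl x⟩⟩

/-- The maximum of the `ε`-class of `x`. -/
noncomputable def maxCl {n : ℕ} (ε : Setoid (Fin n)) (x : Fin n) : Fin n :=
  (Finset.univ.filter fun y => ε.r x y).max'
    ⟨x, Finset.mem_filter.mpr ⟨Finset.mem_univ x, ε.iseqv.refl x⟩⟩

/-- The minima of the un-nested `ε`-classes. -/
noncomputable def anchorsF {n : ℕ} (ε : Setoid (Fin n)) : Finset (Fin n) :=
  Finset.univ.filter fun y => Unnested ε y ∧ minCl ε y = y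

/-- The largest minimum-of-an-un-nested-class that is `≤ x`.  (For a planar
equivalence this always exists; junk default otherwise.) -/
noncomputable def anchorBelow {n : ℕ} [NeZero n] (ε : Setoid (Fin n)) (x : Fin n) : Fin n :=
  if h : ((anchorsF ε).filter (· ≤ x)).Nonempty then ((anchorsF ε).filter (· ≤ x)).max' h
  else 0

/-- The "block" map defining `d_η`: an upper vertex `x` goes to the interval
`A_i = [min B_i, max B_i]` (of the un-nested class `B_i`) containing it; a lower
vertex `x'` goes to the `η`-class of `x`.  Blocks are labelled by the minimum of
the corresponding un-nested class, resp. class. -/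
noncomputable def dMap {n : ℕ} [NeZero n] (ε : Setoid (Fin n)) : V n → Fin n :=
  Sum.elim (fun x => anchorBelow ε x) fun x => minCl ε x

/-- The partition `d_η ∈ PP_n^fd`, with blocks `A_i ∪ B_i'` for the un-nested
`η`-classes `B_i` (where `A_i = [min B_i, max B_i]`), and `C'` for the nested
`η`-classes `C`. -/
noncomputable def dEta {n : ℕ} [NeZero n] (ε : Setoid (Fin n)) : Ptn n :=
  Setoid.ker (dMap ε)

/-- `h̄_ij = d_{η_ij}`. -/
noncomputable def hbar {n : ℕ} [NeZero n] (i j : Fin n) : Ptn n := dEta (etaOf i j)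

/-- The monoid `D_n = {d_η : η a planar equivalence}`, as a subset of `PP_n^fd`. -/
def DSet (n : ℕ) [NeZero n] : Set (Ptn n) :=
  {a | ∃ ε : Setoid (Fin n), IsPlanarEq ε ∧ a = dEta ε}

end PaperFDP

namespace PaperFDP

/-- The range map `ρ(a) = d_{coker a}` on `PP_n^fd`. -/
noncomputable def rhoP {n : ℕ} [NeZero n] (a : Ptn n) : Ptn n := dEta (cokerP a)


set_option linter.dupNamespace false
set_option linter.unusedSectionVars false
set_option maxHeartbeats 1000000


section Basics

variable {n : ℕ}

lemma setoid_r_iff (s : Setoid (Fin n)) (x y : Fin n) : s.r x y ↔ s x y := Iff.rfl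

lemma eqvGen_le {α : Type*} {r : α → α → Prop} {s : Setoid α}
    (h : ∀ x y, r x y → s.r x y) : ∀ x y, Relation.EqvGen r x y → s.r x y := by
  intro x y hxy
  induction hxy with
  | rel _ _ h' => exact h _ _ h'
  | refl => exact s.refl' _
  | symm _ _ _ ih => exact s.symm' ih
  | trans _ _ _ _ _ ih1 ih2 => exact s.trans' ih1 ih2

lemma eqvGen_mono {α : Type*} {r r' : α → α → Prop}
    (h : ∀ x y, r x y → Relation.EqvGen r' x y) :
    ∀ x y, Relation.EqvGen r x y → Relation.EqvGen r' x y := by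
  intro x y hxy
  induction hxy with
  | rel _ _ h' => exact h _ _ h'
  | refl => exact Relation.EqvGen.refl _
  | symm _ _ _ ih => exact ih.symm _ _
  | trans _ _ _ _ _ ih1 ih2 => exact ih1.trans _ _ _ ih2

section MinCl

variable [NeZero n] (ε : Setoid (Fin n))

lemma mem_clsS_iff (x y : Fin n) : y ∈ clsS ε x ↔ ε.r x y := Iff.rfl

lemma clsS_eq_of_rel {x y : Fin n} (h : ε.r x y) : clsS ε x = clsS ε y := by
  ext z; constructor
  · exact fun hz => ε.trans' (ε.symm' h) hz
  · exact fun hz => ε.trans' h hz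

lemma clF_eq_of_rel {x y : Fin n} (h : ε.r x y) :
    (Finset.univ.filter fun z => ε.r x z) = (Finset.univ.filter fun z => ε.r y z) := by
  ext z
  simp only [Finset.mem_filter, Finset.mem_univ, true_and]
  exact ⟨fun hz => ε.trans' (ε.symm' h) hz, fun hz => ε.trans' h hz⟩

lemma minCl_rel (x : Fin n) : ε.r x (minCl ε x) := by
  have := Finset.min'_mem (Finset.univ.filter fun y => ε.r x y)
    ⟨x, Finset.mem_filter.mpr ⟨Finset.mem_univ x, ε.iseqv.refl x⟩⟩
  exact (Finset.mem_filter.mp this).2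

lemma minCl_le {x y : Fin n} (h : ε.r x y) : minCl ε x ≤ y := by
  exact Finset.min'_le _ _ (Finset.mem_filter.mpr ⟨Finset.mem_univ y, h⟩)

lemma minCl_le_self (x : Fin n) : minCl ε x ≤ x := minCl_le ε (ε.refl' x)

lemma minCl_eq_of_rel {x y : Fin n} (h : ε.r x y) : minCl ε x = minCl ε y := by
  unfold minCl
  congr 1
  exact clF_eq_of_rel ε h

lemma rel_of_minCl_eq {x y : Fin n} (h : minCl ε x = minCl ε y) : ε.r x y := by
  have h1 := minCl_rel ε x
  have h2 := minCl_rel ε y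
  rw [h] at h1
  exact ε.trans' h1 (ε.symm' h2)

lemma minCl_idem (x : Fin n) : minCl ε (minCl ε x) = minCl ε x :=
  (minCl_eq_of_rel ε (minCl_rel ε x)).symm

lemma maxCl_rel (x : Fin n) : ε.r x (maxCl ε x) := by
  have := Finset.max'_mem (Finset.univ.filter fun y => ε.r x y)
    ⟨x, Finset.mem_filter.mpr ⟨Finset.mem_univ x, ε.iseqv.refl x⟩⟩
  exact (Finset.mem_filter.mp this).2

lemma le_maxCl {x y : Fin n} (h : ε.r x y) : y ≤ maxCl ε x := by
  exact Finset.le_max' _ _ (Finset.mem_filter.mpr ⟨Finset.mem_univ y, h⟩)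

lemma unnested_of_rel {x y : Fin n} (h : ε.r x y) (hu : Unnested ε x) : Unnested ε y := by
  intro z hz
  rw [← clsS_eq_of_rel ε h] at hz
  exact hu z hz

end MinCl

section Anchors

variable [NeZero n] (ε : Setoid (Fin n))

lemma unnested_zero : Unnested ε 0 := by
  rintro y ⟨b₁, _, b₂, _, _, _, hall⟩
  have h0 : (0 : Fin n) ∈ clsS ε 0 := ε.refl' 0
  exact absurd (hall 0 h0).1 (by simp [Fin.lt_iff_val_lt_val])

lemma minCl_zero : minCl ε 0 = 0 :=
  le_antisymm (minCl_le_self ε 0) (Fin.zero_le _)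

lemma zero_mem_anchorsF : (0 : Fin n) ∈ anchorsF ε := by
  simp only [anchorsF, Finset.mem_filter, Finset.mem_univ, true_and]
  exact ⟨unnested_zero ε, minCl_zero ε⟩

lemma minCl_of_anchor {a : Fin n} (ha : a ∈ anchorsF ε) : minCl ε a = a := by
  simp only [anchorsF, Finset.mem_filter] at ha
  exact ha.2.2

lemma unnested_of_anchor {a : Fin n} (ha : a ∈ anchorsF ε) : Unnested ε a := by
  simp only [anchorsF, Finset.mem_filter] at ha
  exact ha.2.1

lemma anchorsF_filter_nonempty (x : Fin n) : ((anchorsF ε).filter (· ≤ x)).Nonempty :=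
  ⟨0, Finset.mem_filter.mpr ⟨zero_mem_anchorsF ε, Fin.zero_le _⟩⟩

lemma anchorBelow_def (x : Fin n) :
    anchorBelow ε x = ((anchorsF ε).filter (· ≤ x)).max' (anchorsF_filter_nonempty ε x) := by
  rw [anchorBelow, dif_pos (anchorsF_filter_nonempty ε x)]

lemma anchorBelow_mem (x : Fin n) : anchorBelow ε x ∈ anchorsF ε := by
  rw [anchorBelow_def]
  exact (Finset.mem_filter.mp (Finset.max'_mem _ _)).1

lemma anchorBelow_le (x : Fin n) : anchorBelow ε x ≤ x := by
  rw [anchorBelow_def]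
  have h := Finset.max'_mem ((anchorsF ε).filter (· ≤ x)) (anchorsF_filter_nonempty ε x)
  exact (Finset.mem_filter.mp h).2

lemma le_anchorBelow {a x : Fin n} (ha : a ∈ anchorsF ε) (hax : a ≤ x) :
    a ≤ anchorBelow ε x := by
  rw [anchorBelow_def]
  exact Finset.le_max' ((anchorsF ε).filter (· ≤ x)) a (Finset.mem_filter.mpr ⟨ha, hax⟩)

lemma anchorBelow_of_anchor {a : Fin n} (ha : a ∈ anchorsF ε) : anchorBelow ε a = a :=
  le_antisymm (anchorBelow_le ε a) (le_anchorBelow ε ha le_rfl)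

lemma anchorBelow_mono {x y : Fin n} (h : x ≤ y) : anchorBelow ε x ≤ anchorBelow ε y :=
  le_anchorBelow ε (anchorBelow_mem ε x) (le_trans (anchorBelow_le ε x) h)

lemma anchorBelow_idem (x : Fin n) : anchorBelow ε (anchorBelow ε x) = anchorBelow ε x :=
  anchorBelow_of_anchor ε (anchorBelow_mem ε x)

lemma minCl_mem_anchorsF_of_unnested {x : Fin n} (h : Unnested ε x) :
    minCl ε x ∈ anchorsF ε := by
  simp only [anchorsF, Finset.mem_filter, Finset.mem_univ, true_and]
  exact ⟨unnested_of_rel ε (minCl_rel ε x) h, minCl_idem ε x⟩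

/-- P6: `anchorBelow ε x = minCl ε y ↔ ε.r (anchorBelow ε x) y`. -/
lemma anchorBelow_eq_minCl_iff (x y : Fin n) :
    anchorBelow ε x = minCl ε y ↔ ε.r (anchorBelow ε x) y := by
  constructor
  · intro h
    apply rel_of_minCl_eq ε
    rw [minCl_of_anchor ε (anchorBelow_mem ε x), h]
  · intro h
    have := minCl_eq_of_rel ε h
    rw [minCl_of_anchor ε (anchorBelow_mem ε x)] at this
    exact this

end Anchors

section Core

variable [NeZero n] {ε : Setoid (Fin n)}

/-- CORE: for a planar equivalence there is no anchor in `(minCl y, y]`. -/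
lemma core_no_anchor (hpl : IsPlanarEq ε) {a y : Fin n} (ha : a ∈ anchorsF ε)
    (h1 : minCl ε y < a) (h2 : a ≤ y) : False := by
  by_cases hrel : ε.r a y
  · have : minCl ε y = a := by
      rw [← minCl_eq_of_rel ε hrel, minCl_of_anchor ε ha]
    exact absurd this (ne_of_lt h1)
  · rcases hpl a y hrel with hsep | hnest | hnest
    · rcases hsep with hlt | hlt
      · have := hlt a (ε.refl' a) (minCl ε y) (minCl_rel ε y)
        exact absurd h1 (not_lt_of_gt this)
      · have := hlt a (ε.refl' a) y (ε.refl' y)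
        exact absurd h2 (not_le_of_gt this)
    · exact unnested_of_anchor ε ha y hnest
    · rcases hnest with ⟨b₁, hb₁, b₂, hb₂, _, _, hall⟩
      have hmin : b₁ < minCl ε y := (hall (minCl ε y) (minCl_rel ε y)).1
      have : minCl ε a ≤ b₁ := minCl_le ε hb₁
      rw [minCl_of_anchor ε ha] at this
      exact absurd (lt_trans (lt_of_le_of_lt this hmin) h1) (lt_irrefl a)

lemma anchorBelow_le_minCl (hpl : IsPlanarEq ε) (x : Fin n) :
    anchorBelow ε x ≤ minCl ε x := by
  by_contra h
  push_neg at h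
  exact core_no_anchor hpl (anchorBelow_mem ε x) h (anchorBelow_le ε x)

/-- P3: `anchorBelow` is constant on classes of a planar equivalence. -/
lemma anchorBelow_eq_of_rel (hpl : IsPlanarEq ε) {x y : Fin n} (h : ε.r x y) :
    anchorBelow ε x = anchorBelow ε y := by
  have key : ∀ u v : Fin n, ε.r u v → anchorBelow ε u ≤ anchorBelow ε v := by
    intro u v huv
    have h1 : anchorBelow ε u ≤ minCl ε u := anchorBelow_le_minCl hpl u
    have h2 : minCl ε u ≤ v := by rw [minCl_eq_of_rel ε huv]; exact minCl_le_self ε v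
    exact le_anchorBelow ε (anchorBelow_mem ε u) (le_trans h1 h2)
  exact le_antisymm (key x y h) (key y x (ε.symm' h))

/-- P4: if the minimum of a class is an anchor then `anchorBelow` on the class equals it. -/
lemma anchorBelow_eq_minCl (hpl : IsPlanarEq ε) {y : Fin n}
    (h : minCl ε y ∈ anchorsF ε) : anchorBelow ε y = minCl ε y :=
  le_antisymm (anchorBelow_le_minCl hpl y) (le_anchorBelow ε h (minCl_le_self ε y))

/-- P7: un-nested classes of a planar equivalence are separated. -/
lemma sep_of_unnested (hpl : IsPlanarEq ε) {x y : Fin n} (h : ¬ ε.r x y)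
    (hx : Unnested ε x) (hy : Unnested ε y) : SepSets (clsS ε x) (clsS ε y) := by
  rcases hpl x y h with hsep | hnest | hnest
  · exact hsep
  · exact absurd hnest (hx y)
  · exact absurd hnest (hy x)

end Core

end Basics


section NCrossSec

variable {n : ℕ}

/-- Non-crossing property of an equivalence on the line. -/
def NCross (ε : Setoid (Fin n)) : Prop :=
  ∀ w x y z : Fin n, w < x → x < y → y < z → ε.r w y → ε.r x z → ε.r y z

lemma ordV_inr_lt_inr {x y : Fin n} (h : y < x) : ordV (Sum.inr x) < ordV (Sum.inr y) := by
  simp only [ordV, Sum.elim_inr]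
  have hx := x.isLt
  have hy := y.isLt
  have : (y : ℕ) < (x : ℕ) := h
  omega

lemma ordV_inl_lt_inr (x y : Fin n) : ordV (Sum.inl x : V n) < ordV (Sum.inr y) := by
  simp only [ordV, Sum.elim_inl, Sum.elim_inr]
  have hx := x.isLt
  have hy := y.isLt
  omega

lemma cokerP_r (a : Ptn n) (x y : Fin n) : (cokerP a).r x y ↔ a.r (Sum.inr x) (Sum.inr y) :=
  Iff.rfl

/-- Q1a: the cokernel of a planar partition is non-crossing. -/
lemma ncross_cokerP {a : Ptn n} (ha : Planar a) : NCross (cokerP a) := by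
  intro w x y z hwx hxy hyz hwy hxz
  have h := ha (Sum.inr z) (Sum.inr y) (Sum.inr x) (Sum.inr w)
    (ordV_inr_lt_inr hyz) (ordV_inr_lt_inr hxy) (ordV_inr_lt_inr hwx)
    (a.symm' hxz) (a.symm' hwy)
  exact a.symm' h

variable [NeZero n] {ε : Setoid (Fin n)}

lemma maxCl_eq_of_rel (ε : Setoid (Fin n)) {x y : Fin n} (h : ε.r x y) :
    maxCl ε x = maxCl ε y := by
  unfold maxCl; congr 1; exact clF_eq_of_rel ε h

lemma sepSets_comm {A B : Set (Fin n)} (h : SepSets A B) : SepSets B A := by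
  rcases h with h | h
  · exact Or.inr fun b hb a ha => h a ha b hb
  · exact Or.inl fun b hb a ha => h a ha b hb

lemma ncross_merge {w x y z : Fin n} (hnc : NCross ε) (hwx : w < x) (hxy : x < y)
    (hyz : y < z) (hwy : ε.r w y) (hxz : ε.r x z) : ε.r x y :=
  ε.trans' hxz (ε.symm' (hnc w x y z hwx hxy hyz hwy hxz))

lemma trich_aux (hnc : NCross ε) {x y : Fin n} (hxy : ¬ ε.r x y)
    (hlt : minCl ε x < minCl ε y) :
    SepSets (clsS ε x) (clsS ε y) ∨ NestedBy (clsS ε y) (clsS ε x) := by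
  have hdisj : ∀ c, ε.r x c → ε.r y c → False := fun c h1 h2 =>
    hxy (ε.trans' h1 (ε.symm' h2))
  by_cases hsep : ∀ p, ε.r x p → ∀ q, ε.r y q → p < q
  · exact Or.inl (Or.inl fun p hp q hq => hsep p hp q hq)
  · push_neg at hsep
    obtain ⟨p, hp, q, hq, hqp⟩ := hsep
    have hqp' : q < p := lt_of_le_of_ne hqp (fun h => hdisj q (h ▸ hp) hq)
    -- C2 : every element of cls y is < p
    have hC2 : ∀ q', ε.r y q' → q' < p := by
      intro q' hq'
      by_contra hle
      push_neg at hle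
      have hne : p ≠ q' := fun h => hdisj p hp (h ▸ hq')
      have hpq' : p < q' := lt_of_le_of_ne hle hne
      have h1 : minCl ε x < q := lt_of_lt_of_le hlt (minCl_le ε hq)
      have hwy : ε.r (minCl ε x) p := ε.trans' (ε.symm' (minCl_rel ε x)) hp
      have hxz : ε.r q q' := ε.trans' (ε.symm' hq) hq'
      exact hdisj q' (ε.trans' hp (hnc (minCl ε x) q p q' h1 hqp' hpq' hwy hxz)) hq'
    -- C1 : no element of cls x lies in [minCl y, maxCl y]
    have hC1 : ∀ c, ε.r x c → ¬ (minCl ε y ≤ c ∧ c ≤ maxCl ε y) := by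
      rintro c hc ⟨h1, h2⟩
      have hne1 : minCl ε y ≠ c := fun h => hdisj c hc (h ▸ minCl_rel ε y)
      have hne2 : c ≠ maxCl ε y := fun h => hdisj c hc (h ▸ maxCl_rel ε y)
      have h1' : minCl ε y < c := lt_of_le_of_ne h1 hne1
      have h2' : c < maxCl ε y := lt_of_le_of_ne h2 hne2
      have hwy : ε.r (minCl ε x) c := ε.trans' (ε.symm' (minCl_rel ε x)) hc
      have hxz : ε.r (minCl ε y) (maxCl ε y) := ε.trans' (ε.symm' (minCl_rel ε y)) (maxCl_rel ε y)
      have := hnc (minCl ε x) (minCl ε y) c (maxCl ε y) hlt h1' h2' hwy hxz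
      exact hdisj c hc (ε.trans' (maxCl_rel ε y) (ε.symm' this))
    -- the two finsets
    have h₁ : (Finset.univ.filter fun c => ε.r x c ∧ c < minCl ε y).Nonempty :=
      ⟨minCl ε x, Finset.mem_filter.mpr ⟨Finset.mem_univ _, minCl_rel ε x, hlt⟩⟩
    have h₂ : (Finset.univ.filter fun c => ε.r x c ∧ maxCl ε y < c).Nonempty :=
      ⟨p, Finset.mem_filter.mpr ⟨Finset.mem_univ _, hp, hC2 (maxCl ε y) (maxCl_rel ε y)⟩⟩
    set b₁ := (Finset.univ.filter fun c => ε.r x c ∧ c < minCl ε y).max' h₁ with hb₁def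
    set b₂ := (Finset.univ.filter fun c => ε.r x c ∧ maxCl ε y < c).min' h₂ with hb₂def
    have hb₁mem := Finset.max'_mem _ h₁
    have hb₂mem := Finset.min'_mem _ h₂
    rw [Finset.mem_filter] at hb₁mem hb₂mem
    refine Or.inr ⟨b₁, hb₁mem.2.1, b₂, hb₂mem.2.1, ?_, ?_, ?_⟩
    · calc b₁ < minCl ε y := hb₁mem.2.2
        _ ≤ maxCl ε y := minCl_le ε (maxCl_rel ε y)
        _ < b₂ := hb₂mem.2.2
    · rintro b hb ⟨hb1, hb2⟩
      rcases lt_or_ge b (minCl ε y) with h | h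
      · have : b ≤ b₁ := Finset.le_max' _ _ (Finset.mem_filter.mpr ⟨Finset.mem_univ _, hb, h⟩)
        exact absurd hb1 (not_lt_of_ge this)
      · rcases le_or_gt b (maxCl ε y) with h' | h'
        · exact hC1 b hb ⟨h, h'⟩
        · have : b₂ ≤ b := Finset.min'_le _ _ (Finset.mem_filter.mpr ⟨Finset.mem_univ _, hb, h'⟩)
          exact absurd hb2 (not_lt_of_ge this)
    · intro a ha
      constructor
      · exact lt_of_lt_of_le hb₁mem.2.2 (minCl_le ε ha)
      · exact lt_of_le_of_lt (le_maxCl ε ha) hb₂mem.2.2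

/-- Q1b: a non-crossing equivalence is planar. -/
lemma isPlanarEq_of_ncross (hnc : NCross ε) : IsPlanarEq ε := by
  intro x y hxy
  rcases lt_trichotomy (minCl ε x) (minCl ε y) with h | h | h
  · rcases trich_aux hnc hxy h with h' | h'
    · exact Or.inl h'
    · exact Or.inr (Or.inr h')
  · exact absurd (rel_of_minCl_eq ε h) hxy
  · have hxy' : ¬ ε.r y x := fun h' => hxy (ε.symm' h')
    rcases trich_aux hnc hxy' h with h' | h'
    · exact Or.inl (sepSets_comm h')
    · exact Or.inr (Or.inl h')

/-- Q1: the cokernel of a planar partition is a planar equivalence. -/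
lemma isPlanarEq_cokerP {a : Ptn n} (ha : Planar a) : IsPlanarEq (cokerP a) :=
  isPlanarEq_of_ncross (ncross_cokerP ha)

/-- Q2: if an upper point is joined to `y'` in a planar partition, then the
coker-class of `y` is un-nested. -/
lemma unnested_of_upper {a : Ptn n} (ha : Planar a) {u y : Fin n}
    (h : a.r (Sum.inl u) (Sum.inr y)) : Unnested (cokerP a) y := by
  rintro z ⟨b₁, hb₁, b₂, hb₂, hlt, hcons, hall⟩
  have hy : (cokerP a).r y y := (cokerP a).refl' y
  have h1 : b₁ < y := (hall y hy).1
  have h2 : y < b₂ := (hall y hy).2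
  have hb : a.r (Sum.inr b₂) (Sum.inr b₁) :=
    (cokerP a).trans' ((cokerP a).symm' hb₂) hb₁
  have hplanar := ha (Sum.inl u) (Sum.inr b₂) (Sum.inr y) (Sum.inr b₁)
    (ordV_inl_lt_inr u b₂) (ordV_inr_lt_inr h2) (ordV_inr_lt_inr h1) h hb
  -- hplanar : a.r (inl u) (inr b₂), hence coker relates y and b₂
  have : (cokerP a).r y b₂ := a.trans' (a.symm' h) hplanar
  have hb₂cls : b₂ ∈ clsS (cokerP a) y := this
  exact absurd (hall b₂ hb₂cls).2 (lt_irrefl b₂)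

end NCrossSec

section FactE

variable {n : ℕ} [NeZero n] {ε : Setoid (Fin n)}

lemma nestedBy_trans {A B C : Set (Fin n)} (h1 : NestedBy A B) (h2 : NestedBy B C) :
    NestedBy A C := by
  obtain ⟨b₁, hb₁, b₂, hb₂, hblt, hbcons, hball⟩ := h1
  obtain ⟨c₁, hc₁, c₂, hc₂, hclt, hccons, hcall⟩ := h2
  refine ⟨c₁, hc₁, c₂, hc₂, hclt, hccons, ?_⟩
  intro a haA
  have h₁ := (hcall b₁ hb₁).1
  have h₂ := (hcall b₂ hb₂).2
  exact ⟨lt_trans h₁ (hball a haA).1, lt_trans (hball a haA).2 h₂⟩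

/-- CLIMB: a nested class is nested inside an un-nested class. -/
lemma climb (hpl : IsPlanarEq ε) {y : Fin n} (h : ¬ Unnested ε y) :
    ∃ z, Unnested ε z ∧ NestedBy (clsS ε y) (clsS ε z) := by
  have main : ∀ k : ℕ, ∀ y : Fin n, (minCl ε y : ℕ) = k → ¬ Unnested ε y →
      ∃ z, Unnested ε z ∧ NestedBy (clsS ε y) (clsS ε z) := by
    intro k
    induction k using Nat.strong_induction_on with
    | _ k ih =>
      intro y hk hy
      rw [Unnested] at hy
      push_neg at hy
      obtain ⟨z₀, hz₀⟩ := hy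
      by_cases hu : Unnested ε z₀
      · exact ⟨z₀, hu, hz₀⟩
      · obtain ⟨b₁, hb₁, b₂, _, _, _, hall⟩ := hz₀
        have hlt : minCl ε z₀ < minCl ε y := by
          have h1 : minCl ε z₀ ≤ b₁ := minCl_le ε hb₁
          have h2 : b₁ < minCl ε y := (hall (minCl ε y) (minCl_rel ε y)).1
          exact lt_of_le_of_lt h1 h2
        obtain ⟨z, hz1, hz2⟩ := ih (minCl ε z₀) (by rw [← hk]; exact_mod_cast hlt) z₀ rfl hu
        exact ⟨z, hz1, nestedBy_trans ⟨b₁, hb₁, b₂, ‹_›, ‹_›, ‹_›, hall⟩ hz2⟩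
  exact main (minCl ε y) y rfl h

/-- FACT E: every point lies below the maximum of the class of its anchor. -/
lemma le_maxCl_anchorBelow (hpl : IsPlanarEq ε) (x : Fin n) :
    x ≤ maxCl ε (anchorBelow ε x) := by
  have main : ∀ k : ℕ, ∀ c : Fin n, (minCl ε c : ℕ) = k → minCl ε c ≤ x → x ≤ maxCl ε c →
      x ≤ maxCl ε (anchorBelow ε x) := by
    intro k
    induction k using Nat.strong_induction_on with
    | _ k ih =>
      intro c hk h1 h2
      set a := anchorBelow ε x with hadef
      rcases le_or_gt (minCl ε c) a with hca | hca
      · by_cases hrel : ε.r c a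
        · rw [← maxCl_eq_of_rel ε hrel]; exact h2
        · rcases hpl c a hrel with hsep | hnest | hnest
          · rcases hsep with hs | hs
            · have := hs (maxCl ε c) (maxCl_rel ε c) a (ε.refl' a)
              have hax : a ≤ x := anchorBelow_le ε x
              exact absurd (lt_of_le_of_lt (le_trans hax h2) this) (lt_irrefl _)
            · have h' : a < minCl ε c := hs (minCl ε c) (minCl_rel ε c) a (ε.refl' a)
              exact absurd (lt_of_le_of_lt hca h') (lt_irrefl _)
          · obtain ⟨b₁, hb₁, b₂, hb₂, _, _, hall⟩ := hnest
            have hx2 : x < b₂ := lt_of_le_of_lt h2 (hall (maxCl ε c) (maxCl_rel ε c)).2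
            exact le_of_lt (lt_of_lt_of_le hx2 (le_maxCl ε hb₂))
          · exact absurd hnest (unnested_of_anchor ε (anchorBelow_mem ε x) c)
      · by_cases hu : Unnested ε c
        · have hmem : minCl ε c ∈ anchorsF ε := minCl_mem_anchorsF_of_unnested ε hu
          have := le_anchorBelow ε hmem h1
          exact absurd (lt_of_le_of_lt this hca) (lt_irrefl _)
        · obtain ⟨z, _, hnest⟩ := climb hpl hu
          obtain ⟨b₁, hb₁, b₂, hb₂, _, _, hall⟩ := hnest
          have hminz : minCl ε z < minCl ε c := by
            have hb : b₁ < minCl ε c := (hall (minCl ε c) (minCl_rel ε c)).1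
            exact lt_of_le_of_lt (minCl_le ε hb₁) hb
          apply ih (minCl ε z) (by rw [← hk]; exact_mod_cast hminz) z rfl
          · have : minCl ε z < minCl ε c := hminz
            exact le_trans (le_of_lt this) h1
          · exact le_trans (le_trans h2 (le_of_lt (hall (maxCl ε c) (maxCl_rel ε c)).2))
              (le_maxCl ε hb₂)
  exact main (minCl ε x) x rfl (minCl_le_self ε x) (le_maxCl ε (ε.refl' x))

end FactE

section Master

variable {n : ℕ}

/-- The middle-row relation of the product graph. -/
def lamRel (a b : Ptn n) : Fin n → Fin n → Prop :=
  Relation.EqvGen (fun m m' => a.r (Sum.inr m) (Sum.inr m') ∨ b.r (Sum.inl m) (Sum.inl m'))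

section LamBasic
variable {a b : Ptn n}

lemma lam_refl (m : Fin n) : lamRel a b m m := Relation.EqvGen.refl m
lemma lam_symm {m m' : Fin n} (h : lamRel a b m m') : lamRel a b m' m :=
  Relation.EqvGen.symm _ _ h
lemma lam_trans {m m' m'' : Fin n} (h : lamRel a b m m') (h' : lamRel a b m' m'') :
    lamRel a b m m'' := Relation.EqvGen.trans _ _ _ h h'
lemma lam_of_coker {m m' : Fin n} (h : a.r (Sum.inr m) (Sum.inr m')) : lamRel a b m m' :=
  Relation.EqvGen.rel _ _ (Or.inl h)
lemma lam_of_kerb {m m' : Fin n} (h : b.r (Sum.inl m) (Sum.inl m')) : lamRel a b m m' :=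
  Relation.EqvGen.rel _ _ (Or.inr h)
end LamBasic

/-- Reachability into the middle row through `a`-edges. -/
def reachA (a : Ptn n) : W3 n → Fin n → Prop
  | Sum.inl x, m => a.r (Sum.inl x) (Sum.inr m)
  | Sum.inr (Sum.inl m₀), m => a.r (Sum.inr m₀) (Sum.inr m)
  | Sum.inr (Sum.inr _), _ => False

/-- Reachability into the middle row through `b`-edges. -/
def reachB (b : Ptn n) : W3 n → Fin n → Prop
  | Sum.inl _, _ => False
  | Sum.inr (Sum.inl m₀), m => b.r (Sum.inl m) (Sum.inl m₀)
  | Sum.inr (Sum.inr y), m => b.r (Sum.inl m) (Sum.inr y)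

def reach (a b : Ptn n) : Bool → W3 n → Fin n → Prop
  | true => reachA a
  | false => reachB b

def sameA (a : Ptn n) (u v : W3 n) : Prop :=
  ∃ p q : V n, a.r p q ∧ upMid p = u ∧ upMid q = v

def sameB (b : Ptn n) (u v : W3 n) : Prop :=
  ∃ p q : V n, b.r p q ∧ midLow p = u ∧ midLow q = v

/-- The explicit description of connectivity in the product graph. -/
def TRel (a b : Ptn n) (u v : W3 n) : Prop :=
  sameA a u v ∨ sameB b u v ∨
    ∃ i j m m', reach a b i u m ∧ lamRel a b m m' ∧ reach a b j v m'

section TRelLemmas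
variable {a b : Ptn n}

lemma sameA_symm {u v : W3 n} (h : sameA a u v) : sameA a v u := by
  obtain ⟨p, q, hpq, hp, hq⟩ := h
  exact ⟨q, p, a.symm' hpq, hq, hp⟩

lemma sameB_symm {u v : W3 n} (h : sameB b u v) : sameB b v u := by
  obtain ⟨p, q, hpq, hp, hq⟩ := h
  exact ⟨q, p, b.symm' hpq, hq, hp⟩

lemma reachA_upMid {p : V n} {m : Fin n} (h : a.r p (Sum.inr m)) :
    reach a b true (upMid p) m := by
  cases p with
  | inl x => exact h
  | inr m₀ => exact h

lemma upMid_reachA {p : V n} {m : Fin n} (h : reach a b true (upMid p) m) :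
    a.r p (Sum.inr m) := by
  cases p with
  | inl x => exact h
  | inr m₀ => exact h

lemma reachB_midLow {q : V n} {m : Fin n} (h : b.r (Sum.inl m) q) :
    reach a b false (midLow q) m := by
  cases q with
  | inl m₀ => exact h
  | inr y => exact h

lemma midLow_reachB {q : V n} {m : Fin n} (h : reach a b false (midLow q) m) :
    b.r (Sum.inl m) q := by
  cases q with
  | inl m₀ => exact h
  | inr y => exact h

/-- Two middle attachments of the same vertex are `lam`-related. -/
lemma reach_lam {i j : Bool} {u : W3 n} {m k : Fin n}
    (h1 : reach a b i u m) (h2 : reach a b j u k) : lamRel a b m k := by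
  cases u with
  | inl x =>
    cases i with
    | false => exact absurd h1 (by simp [reach, reachB])
    | true =>
      cases j with
      | false => exact absurd h2 (by simp [reach, reachB])
      | true => exact lam_of_coker (a.trans' (a.symm' h1) h2)
  | inr uu =>
    cases uu with
    | inl m₀ =>
      have hm : lamRel a b m₀ m := by
        cases i with
        | true => exact lam_of_coker h1
        | false => exact lam_symm (lam_of_kerb h1)
      have hk : lamRel a b m₀ k := by
        cases j with
        | true => exact lam_of_coker h2
        | false => exact lam_symm (lam_of_kerb h2)
      exact lam_trans (lam_symm hm) hk
    | inr y =>
      cases i with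
      | true => exact absurd h1 (by simp [reach, reachA])
      | false =>
        cases j with
        | true => exact absurd h2 (by simp [reach, reachA])
        | false => exact lam_of_kerb (b.trans' h1 (b.symm' h2))

lemma sameA_reach {u v : W3 n} {i : Bool} {m : Fin n}
    (h : sameA a u v) (hr : reach a b i v m) :
    ∃ m₀, reach a b true u m₀ ∧ lamRel a b m₀ m := by
  obtain ⟨p, q, hpq, hp, hq⟩ := h
  subst hp hq
  cases q with
  | inl x' =>
    cases i with
    | false => exact absurd hr (by simp [reach, reachB, upMid])
    | true =>
      have : a.r (Sum.inl x') (Sum.inr m) := hr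
      exact ⟨m, reachA_upMid (a.trans' hpq this), lam_refl m⟩
  | inr m₀ =>
    cases i with
    | true =>
      have : a.r (Sum.inr m₀) (Sum.inr m) := hr
      exact ⟨m, reachA_upMid (a.trans' hpq this), lam_refl m⟩
    | false =>
      have : b.r (Sum.inl m) (Sum.inl m₀) := hr
      exact ⟨m₀, reachA_upMid hpq, lam_symm (lam_of_kerb this)⟩

lemma sameB_reach {u v : W3 n} {i : Bool} {m : Fin n}
    (h : sameB b u v) (hr : reach a b i v m) :
    ∃ m₀, reach a b false u m₀ ∧ lamRel a b m₀ m := by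
  obtain ⟨p, q, hpq, hp, hq⟩ := h
  subst hp hq
  cases q with
  | inl m₀ =>
    cases i with
    | true =>
      have hh : a.r (Sum.inr m₀) (Sum.inr m) := hr
      exact ⟨m₀, reachB_midLow (b.symm' hpq), lam_of_coker hh⟩
    | false =>
      have hh : b.r (Sum.inl m) (Sum.inl m₀) := hr
      exact ⟨m, reachB_midLow (b.trans' hh (b.symm' hpq)), lam_refl m⟩
  | inr y =>
    cases i with
    | true => exact absurd hr (by simp [reach, reachA, midLow])
    | false =>
      have hh : b.r (Sum.inl m) (Sum.inr y) := hr
      exact ⟨m, reachB_midLow (b.trans' hh (b.symm' hpq)), lam_refl m⟩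

lemma upMid_inj : Function.Injective (upMid (n := n)) := by
  intro p q h
  cases p <;> cases q <;> simp_all [upMid]

lemma midLow_inj : Function.Injective (midLow (n := n)) := by
  intro p q h
  cases p <;> cases q <;> simp_all [midLow]

lemma sameA_sameB {u v w : W3 n} (h1 : sameA a u v) (h2 : sameB b v w) :
    ∃ m₀, reach a b true u m₀ ∧ reach a b false w m₀ := by
  obtain ⟨p, q, hpq, hp, hq⟩ := h1
  obtain ⟨p₂, q₂, hpq₂, hp₂, hq₂⟩ := h2
  subst hp hq₂
  cases q with
  | inl x =>
    exfalso
    cases p₂ with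
    | inl m₁ => rw [← hq] at hp₂; simp [upMid, midLow] at hp₂
    | inr y => rw [← hq] at hp₂; simp [upMid, midLow] at hp₂
  | inr m₀ =>
    cases p₂ with
    | inl m₁ =>
      have hm : m₁ = m₀ := by
        rw [← hq] at hp₂
        simpa [upMid, midLow] using hp₂
      subst hm
      exact ⟨m₁, reachA_upMid hpq, reachB_midLow hpq₂⟩
    | inr y => rw [← hq] at hp₂; simp [upMid, midLow] at hp₂

lemma TRel_refl (u : W3 n) : TRel a b u u := by
  cases u with
  | inl x => exact Or.inl ⟨Sum.inl x, Sum.inl x, a.refl' _, rfl, rfl⟩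
  | inr uu =>
    cases uu with
    | inl m => exact Or.inr (Or.inr ⟨true, true, m, m, a.refl' _, lam_refl m, a.refl' _⟩)
    | inr y => exact Or.inr (Or.inl ⟨Sum.inr y, Sum.inr y, b.refl' _, rfl, rfl⟩)

lemma TRel_symm {u v : W3 n} (h : TRel a b u v) : TRel a b v u := by
  rcases h with h | h | ⟨i, j, m, m', h1, h2, h3⟩
  · exact Or.inl (sameA_symm h)
  · exact Or.inr (Or.inl (sameB_symm h))
  · exact Or.inr (Or.inr ⟨j, i, m', m, h3, lam_symm h2, h1⟩)

lemma TRel_trans {u v w : W3 n} (h : TRel a b u v) (h' : TRel a b v w) :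
    TRel a b u w := by
  rcases h with h | h | ⟨i, j, m, m', h1, h2, h3⟩
  · -- sameA u v
    rcases h' with h' | h' | ⟨i', j', k, k', h1', h2', h3'⟩
    · -- sameA v w
      obtain ⟨p, q, hpq, hp, hq⟩ := h
      obtain ⟨p', q', hpq', hp', hq'⟩ := h'
      have : q = p' := upMid_inj (hq.trans hp'.symm)
      subst this
      exact Or.inl ⟨p, q', a.trans' hpq hpq', hp, hq'⟩
    · -- sameB v w
      obtain ⟨m₀, hu, hw⟩ := sameA_sameB h h'
      exact Or.inr (Or.inr ⟨true, false, m₀, m₀, hu, lam_refl m₀, hw⟩)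
    · obtain ⟨m₀, hu, hl⟩ := sameA_reach h h1'
      exact Or.inr (Or.inr ⟨true, j', m₀, k', hu, lam_trans hl h2', h3'⟩)
  · -- sameB u v
    rcases h' with h' | h' | ⟨i', j', k, k', h1', h2', h3'⟩
    · -- sameA v w : use symmetric of the sameA_sameB composition
      obtain ⟨m₀, hw, hu⟩ := sameA_sameB (sameA_symm h') (sameB_symm h)
      exact Or.inr (Or.inr ⟨false, true, m₀, m₀, hu, lam_refl m₀, hw⟩)
    · obtain ⟨p, q, hpq, hp, hq⟩ := h
      obtain ⟨p', q', hpq', hp', hq'⟩ := h'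
      have : q = p' := midLow_inj (hq.trans hp'.symm)
      subst this
      exact Or.inr (Or.inl ⟨p, q', b.trans' hpq hpq', hp, hq'⟩)
    · obtain ⟨m₀, hu, hl⟩ := sameB_reach h h1'
      exact Or.inr (Or.inr ⟨false, j', m₀, k', hu, lam_trans hl h2', h3'⟩)
  · -- mixed u v
    rcases h' with h' | h' | ⟨i', j', k, k', h1', h2', h3'⟩
    · obtain ⟨m₀, hw, hl⟩ := sameA_reach (sameA_symm h') h3
      exact Or.inr (Or.inr ⟨i, true, m, m₀, h1, lam_trans h2 (lam_symm hl), hw⟩)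
    · obtain ⟨m₀, hw, hl⟩ := sameB_reach (sameB_symm h') h3
      exact Or.inr (Or.inr ⟨i, false, m, m₀, h1, lam_trans h2 (lam_symm hl), hw⟩)
    · have hmid : lamRel a b m' k := reach_lam h3 h1'
      exact Or.inr (Or.inr ⟨i, j', m, k', h1,
        lam_trans h2 (lam_trans hmid h2'), h3'⟩)

/-- `TRel` as a setoid. -/
def TSetoid (a b : Ptn n) : Setoid (W3 n) :=
  ⟨TRel a b, ⟨TRel_refl, TRel_symm, TRel_trans⟩⟩

lemma joinRel_le_TRel (u v : W3 n) (h : joinRel a b u v) : TRel a b u v := by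
  rcases h with h | h
  · exact Or.inl h
  · exact Or.inr (Or.inl h)

lemma reach_to_S {i : Bool} {u : W3 n} {m : Fin n} (h : reach a b i u m) :
    Relation.EqvGen (joinRel a b) u (Sum.inr (Sum.inl m)) := by
  cases i with
  | true =>
    cases u with
    | inl x =>
      exact Relation.EqvGen.rel _ _ (Or.inl ⟨Sum.inl x, Sum.inr m, h, rfl, rfl⟩)
    | inr uu =>
      cases uu with
      | inl m₀ =>
        exact Relation.EqvGen.rel _ _ (Or.inl ⟨Sum.inr m₀, Sum.inr m, h, rfl, rfl⟩)
      | inr y => exact absurd h (by simp [reach, reachA])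
  | false =>
    cases u with
    | inl x => exact absurd h (by simp [reach, reachB])
    | inr uu =>
      cases uu with
      | inl m₀ =>
        exact Relation.EqvGen.symm _ _
          (Relation.EqvGen.rel _ _ (Or.inr ⟨Sum.inl m, Sum.inl m₀, h, rfl, rfl⟩))
      | inr y =>
        exact Relation.EqvGen.symm _ _
          (Relation.EqvGen.rel _ _ (Or.inr ⟨Sum.inl m, Sum.inr y, h, rfl, rfl⟩))

lemma lam_to_S {m m' : Fin n} (h : lamRel a b m m') :
    Relation.EqvGen (joinRel a b) (Sum.inr (Sum.inl m)) (Sum.inr (Sum.inl m')) := by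
  induction h with
  | rel x y hxy =>
    rcases hxy with h | h
    · exact Relation.EqvGen.rel _ _ (Or.inl ⟨Sum.inr x, Sum.inr y, h, rfl, rfl⟩)
    · exact Relation.EqvGen.rel _ _ (Or.inr ⟨Sum.inl x, Sum.inl y, h, rfl, rfl⟩)
  | refl x => exact Relation.EqvGen.refl _
  | symm _ _ _ ih => exact Relation.EqvGen.symm _ _ ih
  | trans _ _ _ _ _ ih1 ih2 => exact Relation.EqvGen.trans _ _ _ ih1 ih2

lemma TRel_to_S {u v : W3 n} (h : TRel a b u v) :
    Relation.EqvGen (joinRel a b) u v := by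
  rcases h with h | h | ⟨i, j, m, m', h1, h2, h3⟩
  · exact Relation.EqvGen.rel _ _ (Or.inl h)
  · exact Relation.EqvGen.rel _ _ (Or.inr h)
  · exact Relation.EqvGen.trans _ _ _ (reach_to_S h1)
      (Relation.EqvGen.trans _ _ _ (lam_to_S h2)
        (Relation.EqvGen.symm _ _ (reach_to_S h3)))

/-- The MASTER lemma: explicit description of the product of two partitions. -/
lemma pmul_r_iff (a b : Ptn n) (u v : V n) :
    (pmul a b).r u v ↔ TRel a b (outer u) (outer v) := by
  constructor
  · intro h
    exact eqvGen_le (s := TSetoid a b) (fun x y hxy => joinRel_le_TRel x y hxy) _ _ h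
  · intro h
    exact TRel_to_S h

end TRelLemmas

section Components

variable {a b : Ptn n}

lemma Mtt (x x' : Fin n) :
    (pmul a b).r (Sum.inl x) (Sum.inl x') ↔
      a.r (Sum.inl x) (Sum.inl x') ∨
        ∃ m m', a.r (Sum.inl x) (Sum.inr m) ∧ lamRel a b m m' ∧
          a.r (Sum.inl x') (Sum.inr m') := by
  rw [pmul_r_iff]
  constructor
  · intro h
    rcases h with h | h | ⟨i, j, m, m', h1, h2, h3⟩
    · obtain ⟨p, q, hpq, hp, hq⟩ := h
      cases p with
      | inl z =>
        cases q with
        | inl z' =>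
          simp only [upMid, Sum.elim_inl, outer] at hp hq
          have hz : z = x := Sum.inl_injective hp
          have hz' : z' = x' := Sum.inl_injective hq
          subst hz hz'
          exact Or.inl hpq
        | inr z' => simp [upMid, outer] at hq
      | inr z => simp [upMid, outer] at hp
    · obtain ⟨p, q, hpq, hp, hq⟩ := h
      cases p with
      | inl z => simp [midLow, outer] at hp
      | inr z => simp [midLow, outer] at hp
    · cases i with
      | false => exact absurd h1 (by simp [outer, reach, reachB])
      | true =>
        cases j with
        | false => exact absurd h3 (by simp [outer, reach, reachB])
        | true =>
          exact Or.inr ⟨m, m', h1, h2, h3⟩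
  · intro h
    rcases h with h | ⟨m, m', h1, h2, h3⟩
    · exact Or.inl ⟨Sum.inl x, Sum.inl x', h, rfl, rfl⟩
    · exact Or.inr (Or.inr ⟨true, true, m, m', h1, h2, h3⟩)

lemma Mtl (x y : Fin n) :
    (pmul a b).r (Sum.inl x) (Sum.inr y) ↔
      ∃ m m', a.r (Sum.inl x) (Sum.inr m) ∧ lamRel a b m m' ∧
        b.r (Sum.inl m') (Sum.inr y) := by
  rw [pmul_r_iff]
  constructor
  · intro h
    rcases h with h | h | ⟨i, j, m, m', h1, h2, h3⟩
    · obtain ⟨p, q, hpq, hp, hq⟩ := h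
      exfalso
      cases q with
      | inl z => simp [upMid, outer] at hq
      | inr z => simp [upMid, outer] at hq
    · obtain ⟨p, q, hpq, hp, hq⟩ := h
      exfalso
      cases p with
      | inl z => simp [midLow, outer] at hp
      | inr z => simp [midLow, outer] at hp
    · cases i with
      | false => exact absurd h1 (by simp [outer, reach, reachB])
      | true =>
        cases j with
        | true => exact absurd h3 (by simp [outer, reach, reachA])
        | false => exact ⟨m, m', h1, h2, h3⟩
  · rintro ⟨m, m', h1, h2, h3⟩
    exact Or.inr (Or.inr ⟨true, false, m, m', h1, h2, h3⟩)

lemma Mll (y y' : Fin n) :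
    (pmul a b).r (Sum.inr y) (Sum.inr y') ↔
      b.r (Sum.inr y) (Sum.inr y') ∨
        ∃ m m', b.r (Sum.inl m) (Sum.inr y) ∧ lamRel a b m m' ∧
          b.r (Sum.inl m') (Sum.inr y') := by
  rw [pmul_r_iff]
  constructor
  · intro h
    rcases h with h | h | ⟨i, j, m, m', h1, h2, h3⟩
    · obtain ⟨p, q, hpq, hp, hq⟩ := h
      exfalso
      cases p with
      | inl z => simp [upMid, outer] at hp
      | inr z => simp [upMid, outer] at hp
    · obtain ⟨p, q, hpq, hp, hq⟩ := h
      cases p with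
      | inl z => simp [midLow, outer] at hp
      | inr z =>
        cases q with
        | inl w => simp [midLow, outer] at hq
        | inr w =>
          simp only [midLow, Sum.elim_inr, outer] at hp hq
          have hz : z = y := by
            have := Sum.inr_injective hp; exact Sum.inr_injective this
          have hw : w = y' := by
            have := Sum.inr_injective hq; exact Sum.inr_injective this
          subst hz hw
          exact Or.inl hpq
    · cases i with
      | true => exact absurd h1 (by simp [outer, reach, reachA])
      | false =>
        cases j with
        | true => exact absurd h3 (by simp [outer, reach, reachA])
        | false => exact Or.inr ⟨m, m', h1, h2, h3⟩
  · intro h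
    rcases h with h | ⟨m, m', h1, h2, h3⟩
    · exact Or.inr (Or.inl ⟨Sum.inr y, Sum.inr y', h, rfl, rfl⟩)
    · exact Or.inr (Or.inr ⟨false, false, m, m', h1, h2, h3⟩)

end Components

end Master

section DEtaBasic

variable {n : ℕ} [NeZero n]

lemma dEta_tt (ε : Setoid (Fin n)) (x x' : Fin n) :
    (dEta ε).r (Sum.inl x) (Sum.inl x') ↔ anchorBelow ε x = anchorBelow ε x' := Iff.rfl

lemma dEta_tl (ε : Setoid (Fin n)) (x y : Fin n) :
    (dEta ε).r (Sum.inl x) (Sum.inr y) ↔ anchorBelow ε x = minCl ε y := Iff.rfl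

lemma dEta_ll (ε : Setoid (Fin n)) (y y' : Fin n) :
    (dEta ε).r (Sum.inr y) (Sum.inr y') ↔ ε.r y y' := by
  constructor
  · exact fun h => rel_of_minCl_eq ε h
  · exact fun h => minCl_eq_of_rel ε h

lemma cokerP_dEta (ε : Setoid (Fin n)) : cokerP (dEta ε) = ε :=
  Setoid.ext fun y y' => dEta_ll ε y y'

lemma fullDom_dEta (ε : Setoid (Fin n)) : FullDom (dEta ε) := by
  intro x
  exact ⟨anchorBelow ε x, (minCl_of_anchor ε (anchorBelow_mem ε x)).symm⟩

lemma rhoP_dEta (ε : Setoid (Fin n)) : rhoP (dEta ε) = dEta ε := by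
  rw [rhoP, cokerP_dEta]

/-- G2. -/
lemma g2 (a : Ptn n) : rhoP (rhoP a) = rhoP a := rhoP_dEta _

lemma lam_congr {a a' b : Ptn n} (h : cokerP a = cokerP a') (m m' : Fin n) :
    lamRel a b m m' ↔ lamRel a' b m m' := by
  have key : ∀ (c c' : Ptn n), cokerP c = cokerP c' →
      ∀ m m', lamRel c b m m' → lamRel c' b m m' := by
    intro c c' hcc m m' hl
    refine eqvGen_mono (r' := fun m m' => c'.r (Sum.inr m) (Sum.inr m') ∨
      b.r (Sum.inl m) (Sum.inl m')) ?_ m m' hl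
    intro u v huv
    rcases huv with h' | h'
    · refine Relation.EqvGen.rel _ _ (Or.inl ?_)
      have : (cokerP c).r u v := h'
      rw [hcc] at this
      exact this
    · exact Relation.EqvGen.rel _ _ (Or.inr h')
  exact ⟨key a a' h m m', key a' a h.symm m m'⟩

/-- coker of a product only depends on the coker of the left factor. -/
lemma coker_dep {a a' b : Ptn n} (h : cokerP a = cokerP a') :
    cokerP (pmul a b) = cokerP (pmul a' b) := by
  apply Setoid.ext
  intro y y'
  show (pmul a b).r (Sum.inr y) (Sum.inr y') ↔ (pmul a' b).r (Sum.inr y) (Sum.inr y')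
  rw [Mll, Mll]
  constructor <;> rintro (h' | ⟨m, m', h1, h2, h3⟩)
  · exact Or.inl h'
  · exact Or.inr ⟨m, m', h1, (lam_congr h m m').mp h2, h3⟩
  · exact Or.inl h'
  · exact Or.inr ⟨m, m', h1, (lam_congr h m m').mpr h2, h3⟩

/-- G7. -/
lemma g7 (a b : Ptn n) : rhoP (pmul a b) = rhoP (pmul (rhoP a) b) := by
  unfold rhoP
  congr 1
  refine coker_dep ?_
  rw [cokerP_dEta]

lemma symm_iff (s : Setoid (V n)) (u v : V n) : s.r u v ↔ s.r v u :=
  ⟨s.symm', s.symm'⟩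

/-- `lamRel a (dEta ε)` is the kernel of `anchorBelow` when `coker a = ε` is planar. -/
lemma lam_dEta_right {a : Ptn n} {ε : Setoid (Fin n)} (hpl : IsPlanarEq ε)
    (hc : cokerP a = ε) (m m' : Fin n) :
    lamRel a (dEta ε) m m' ↔ anchorBelow ε m = anchorBelow ε m' := by
  constructor
  · intro h
    refine eqvGen_le (s := Setoid.ker (anchorBelow ε)) ?_ m m' h
    intro u v huv
    rcases huv with h' | h'
    · have : (cokerP a).r u v := h'
      rw [hc] at this
      exact anchorBelow_eq_of_rel hpl this
    · exact h'
  · intro h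
    exact Relation.EqvGen.rel _ _ (Or.inr h)

end DEtaBasic

section G1sec

variable {n : ℕ} [NeZero n] {a : Ptn n}

/-- the minimum of the class of a lower point attached to an upper point is an anchor. -/
lemma minCl_anchor_of_upper (hpa : Planar a) {u m : Fin n}
    (h : a.r (Sum.inl u) (Sum.inr m)) :
    minCl (cokerP a) m ∈ anchorsF (cokerP a) :=
  minCl_mem_anchorsF_of_unnested _ (unnested_of_upper hpa h)

lemma anchorBelow_of_upper (hpa : Planar a) {u m : Fin n}
    (h : a.r (Sum.inl u) (Sum.inr m)) :
    anchorBelow (cokerP a) m = minCl (cokerP a) m :=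
  anchorBelow_eq_minCl (isPlanarEq_cokerP hpa) (minCl_anchor_of_upper hpa h)

/-- G1 : `a · ρ(a) = a`. -/
lemma g1 (hfd : FullDom a) (hpa : Planar a) : pmul a (rhoP a) = a := by
  set ε := cokerP a with hεdef
  have hpl : IsPlanarEq ε := isPlanarEq_cokerP hpa
  have hc : cokerP a = ε := rfl
  apply Setoid.ext
  have key : ∀ u v : V n, (pmul a (dEta ε)).r u v ↔ a.r u v := by
    have htl : ∀ x y : Fin n,
        (pmul a (dEta ε)).r (Sum.inl x) (Sum.inr y) ↔ a.r (Sum.inl x) (Sum.inr y) := by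
      intro x y
      rw [Mtl]
      constructor
      · rintro ⟨m, m', h1, h2, h3⟩
        rw [lam_dEta_right hpl hc] at h2
        rw [dEta_tl] at h3
        have hm : anchorBelow ε m = minCl ε m := anchorBelow_of_upper hpa h1
        have : minCl ε m = minCl ε y := by rw [← hm, h2, h3]
        have hrel : ε.r m y := rel_of_minCl_eq ε this
        exact a.trans' h1 hrel
      · intro h
        refine ⟨y, y, h, lam_refl y, ?_⟩
        rw [dEta_tl]
        exact anchorBelow_of_upper hpa h
    intro u v
    cases u with
    | inl x =>
      cases v with
      | inl x' =>
        rw [Mtt]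
        constructor
        · rintro (h | ⟨m, m', h1, h2, h3⟩)
          · exact h
          · rw [lam_dEta_right hpl hc] at h2
            have hm : anchorBelow ε m = minCl ε m := anchorBelow_of_upper hpa h1
            have hm' : anchorBelow ε m' = minCl ε m' := anchorBelow_of_upper hpa h3
            have : minCl ε m = minCl ε m' := by rw [← hm, h2, hm']
            have hrel : ε.r m m' := rel_of_minCl_eq ε this
            exact a.trans' (a.trans' h1 hrel) (a.symm' h3)
        · exact fun h => Or.inl h
      | inr y => exact htl x y
    | inr y =>
      cases v with
      | inl x =>
        rw [symm_iff (pmul a (dEta ε)), symm_iff a]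
        exact htl x y
      | inr y' =>
        rw [Mll]
        constructor
        · rintro (h | ⟨m, m', h1, h2, h3⟩)
          · exact (dEta_ll ε y y').mp h
          · rw [lam_dEta_right hpl hc] at h2
            rw [dEta_tl] at h1 h3
            have : minCl ε y = minCl ε y' := by rw [← h1, h2, h3]
            exact rel_of_minCl_eq ε this
        · intro h
          exact Or.inl ((dEta_ll ε y y').mpr h)
  exact key

/-- G3 : `ρ(a)·ρ(a) = ρ(a)` (in `dEta` form, for any planar `ε`). -/
lemma dEta_idem {ε : Setoid (Fin n)} (hpl : IsPlanarEq ε) :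
    pmul (dEta ε) (dEta ε) = dEta ε := by
  have hc : cokerP (dEta ε) = ε := cokerP_dEta ε
  apply Setoid.ext
  have htl : ∀ x y : Fin n,
      (pmul (dEta ε) (dEta ε)).r (Sum.inl x) (Sum.inr y) ↔
        (dEta ε).r (Sum.inl x) (Sum.inr y) := by
    intro x y
    rw [Mtl, dEta_tl]
    constructor
    · rintro ⟨m, m', h1, h2, h3⟩
      rw [lam_dEta_right hpl hc] at h2
      rw [dEta_tl] at h1 h3
      have hm : anchorBelow ε m = minCl ε m := by
        refine anchorBelow_eq_minCl hpl ?_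
        rw [← h1]
        exact anchorBelow_mem ε x
      rw [← h3, ← h2, hm]
      exact h1
    · intro h
      refine ⟨anchorBelow ε x, anchorBelow ε x, ?_, lam_refl _, ?_⟩
      · rw [dEta_tl, minCl_of_anchor ε (anchorBelow_mem ε x)]
      · rw [dEta_tl, anchorBelow_idem, h]
  intro u v
  cases u with
  | inl x =>
    cases v with
    | inl x' =>
      rw [Mtt, dEta_tt]
      constructor
      · rintro (h | ⟨m, m', h1, h2, h3⟩)
        · exact h
        · rw [lam_dEta_right hpl hc] at h2
          rw [dEta_tl] at h1 h3
          have hm : anchorBelow ε m = minCl ε m := by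
            refine anchorBelow_eq_minCl hpl ?_
            rw [← h1]; exact anchorBelow_mem ε x
          have hm' : anchorBelow ε m' = minCl ε m' := by
            refine anchorBelow_eq_minCl hpl ?_
            rw [← h3]; exact anchorBelow_mem ε x'
          rw [h1, ← hm, h2, hm', ← h3]
      · intro h
        exact Or.inl h
    | inr y => exact htl x y
  | inr y =>
    cases v with
    | inl x =>
      rw [symm_iff (pmul (dEta ε) (dEta ε)), symm_iff (dEta ε)]
      exact htl x y
    | inr y' =>
      rw [Mll, dEta_ll]
      constructor
      · rintro (h | ⟨m, m', h1, h2, h3⟩)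
        · exact h
        · rw [lam_dEta_right hpl hc] at h2
          rw [dEta_tl] at h1 h3
          apply rel_of_minCl_eq ε
          rw [← h1, h2, h3]
      · intro h
        exact Or.inl h

end G1sec

section NCrossOfPlanar

variable {n : ℕ} [NeZero n] {ε : Setoid (Fin n)}

/-- A planar equivalence is non-crossing. -/
lemma ncross_of_planar (hpl : IsPlanarEq ε) : NCross ε := by
  intro w x y z hwx hxy hyz hwy hxz
  have hwx' : ε.r w x := by
    by_contra hne
    rcases hpl w x hne with hsep | hnest | hnest
    · rcases hsep with hs | hs
      · exact absurd (hs y hwy x (ε.refl' x)) (not_lt_of_gt hxy)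
      · exact absurd (hs w (ε.refl' w) z hxz) (not_lt_of_gt (lt_trans (lt_trans hwx hxy) hyz))
    · obtain ⟨b₁, hb₁, b₂, hb₂, _, hcons, hall⟩ := hnest
      have h1 := (hall w (ε.refl' w)).1
      have h2 := (hall y hwy).2
      exact hcons x (ε.refl' x) ⟨lt_trans h1 hwx, lt_trans hxy h2⟩
    · obtain ⟨c₁, hc₁, c₂, hc₂, _, hcons, hall⟩ := hnest
      have h1 := (hall x (ε.refl' x)).1
      have h2 := (hall z hxz).2
      exact hcons y hwy ⟨lt_trans h1 hxy, lt_trans hyz h2⟩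
  have hxy' : ε.r x y := ε.trans' (ε.symm' hwx') hwy
  exact ε.trans' (ε.symm' hxy') hxz

lemma lt_of_ordV_inl_inl {x x' : Fin n} (h : ordV (Sum.inl x : V n) < ordV (Sum.inl x')) :
    x < x' := by
  simp only [ordV, Sum.elim_inl] at h
  exact Fin.lt_def.mpr h

lemma lt_of_ordV_inr_inr {y y' : Fin n} (h : ordV (Sum.inr y : V n) < ordV (Sum.inr y')) :
    y' < y := by
  simp only [ordV, Sum.elim_inr] at h
  have hy := y.isLt
  have hy' := y'.isLt
  rw [Fin.lt_def]
  omega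

lemma not_ordV_inr_lt_inl {y x : Fin n} : ¬ ordV (Sum.inr y : V n) < ordV (Sum.inl x) := by
  simp only [ordV, Sum.elim_inr, Sum.elim_inl]
  have hy := y.isLt
  have hx := x.isLt
  omega

/-- `dEta` of a planar equivalence is planar. -/
lemma planar_dEta (hpl : IsPlanarEq ε) : Planar (dEta ε) := by
  have hnc := ncross_of_planar hpl
  intro p q r s hpq hqr hrs hpr hqs
  cases p with
  | inl x₁ =>
    cases q with
    | inl x₂ =>
      cases r with
      | inl x₃ =>
        -- UUU*
        have h12 : x₁ < x₂ := lt_of_ordV_inl_inl hpq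
        have h23 : x₂ < x₃ := lt_of_ordV_inl_inl hqr
        have h13 : anchorBelow ε x₁ = anchorBelow ε x₃ := hpr
        show anchorBelow ε x₁ = anchorBelow ε x₂
        refine le_antisymm (anchorBelow_mono ε (le_of_lt h12)) ?_
        rw [h13]
        exact anchorBelow_mono ε (le_of_lt h23)
      | inr y₃ =>
        cases s with
        | inl x₄ => exact absurd hrs not_ordV_inr_lt_inl
        | inr y₄ =>
          -- UULL
          have h12 : x₁ < x₂ := lt_of_ordV_inl_inl hpq
          have h43 : y₄ < y₃ := lt_of_ordV_inr_inr hrs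
          have h13 : anchorBelow ε x₁ = minCl ε y₃ := hpr
          have h24 : anchorBelow ε x₂ = minCl ε y₄ := hqs
          show anchorBelow ε x₁ = anchorBelow ε x₂
          have hle : anchorBelow ε x₁ ≤ anchorBelow ε x₂ := anchorBelow_mono ε (le_of_lt h12)
          rcases eq_or_lt_of_le hle with h | h
          · exact h
          · exfalso
            by_cases hrel : ε.r y₃ y₄
            · rw [h13, h24, minCl_eq_of_rel ε hrel] at h
              exact lt_irrefl _ h
            · have hu₃ : Unnested ε y₃ := by
                have : minCl ε y₃ ∈ anchorsF ε := by rw [← h13]; exact anchorBelow_mem ε x₁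
                exact unnested_of_rel ε (ε.symm' (minCl_rel ε y₃)) (unnested_of_anchor ε this)
              have hu₄ : Unnested ε y₄ := by
                have : minCl ε y₄ ∈ anchorsF ε := by rw [← h24]; exact anchorBelow_mem ε x₂
                exact unnested_of_rel ε (ε.symm' (minCl_rel ε y₄)) (unnested_of_anchor ε this)
              rcases sep_of_unnested hpl hrel hu₃ hu₄ with hs | hs
              · -- all cls y₃ < all cls y₄, but minCl y₄ ≤ y₄ < y₃
                have := hs y₃ (ε.refl' y₃) y₄ (ε.refl' y₄)
                exact absurd h43 (not_lt_of_gt this)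
              · -- all cls y₄ < all cls y₃ : minCl y₄ < minCl y₃ contradicting h
                have := hs (minCl ε y₃) (minCl_rel ε y₃) (minCl ε y₄) (minCl_rel ε y₄)
                rw [← h13, ← h24] at this
                exact absurd h (not_lt_of_gt this)
    | inr y₂ =>
      cases r with
      | inl x₃ => exact absurd hqr not_ordV_inr_lt_inl
      | inr y₃ =>
        cases s with
        | inl x₄ => exact absurd hrs not_ordV_inr_lt_inl
        | inr y₄ =>
          -- ULLL
          have h32 : y₃ < y₂ := lt_of_ordV_inr_inr hqr
          have h43 : y₄ < y₃ := lt_of_ordV_inr_inr hrs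
          have h13 : anchorBelow ε x₁ = minCl ε y₃ := hpr
          have h24 : ε.r y₂ y₄ := (dEta_ll ε y₂ y₄).mp hqs
          show anchorBelow ε x₁ = minCl ε y₂
          by_cases hrel : ε.r y₂ y₃
          · rw [h13, minCl_eq_of_rel ε hrel]
          · exfalso
            have hu₃ : Unnested ε y₃ := by
              have : minCl ε y₃ ∈ anchorsF ε := by rw [← h13]; exact anchorBelow_mem ε x₁
              exact unnested_of_rel ε (ε.symm' (minCl_rel ε y₃)) (unnested_of_anchor ε this)
            have hrel' : ¬ ε.r y₃ y₂ := fun h => hrel (ε.symm' h)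
            rcases hpl y₃ y₂ hrel' with hsep | hnest | hnest
            · rcases hsep with hs | hs
              · exact absurd (hs y₃ (ε.refl' y₃) y₄ (ε.trans' h24 (ε.refl' y₄)))
                  (not_lt_of_gt h43)
              · exact absurd (hs y₃ (ε.refl' y₃) y₂ (ε.refl' y₂)) (not_lt_of_gt h32)
            · exact hu₃ y₂ hnest
            · obtain ⟨b₁, hb₁, b₂, hb₂, _, hcons, hall⟩ := hnest
              have h1 := (hall y₄ (ε.symm' (ε.symm' h24))).1
              have h2 := (hall y₂ (ε.refl' y₂)).2
              exact hcons y₃ (ε.refl' y₃) ⟨lt_trans h1 h43, lt_trans h32 h2⟩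
  | inr y₁ =>
    cases q with
    | inl x₂ => exact absurd hpq not_ordV_inr_lt_inl
    | inr y₂ =>
      cases r with
      | inl x₃ => exact absurd hqr not_ordV_inr_lt_inl
      | inr y₃ =>
        cases s with
        | inl x₄ => exact absurd hrs not_ordV_inr_lt_inl
        | inr y₄ =>
          -- LLLL
          have h21 : y₂ < y₁ := lt_of_ordV_inr_inr hpq
          have h32 : y₃ < y₂ := lt_of_ordV_inr_inr hqr
          have h43 : y₄ < y₃ := lt_of_ordV_inr_inr hrs
          have h13 : ε.r y₁ y₃ := (dEta_ll ε y₁ y₃).mp hpr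
          have h24 : ε.r y₂ y₄ := (dEta_ll ε y₂ y₄).mp hqs
          refine (dEta_ll ε y₁ y₂).mpr ?_
          have := hnc y₄ y₃ y₂ y₁ h43 h32 h21 (ε.symm' h24) (ε.symm' h13)
          exact ε.symm' this
end NCrossOfPlanar

section BlockLemmas

variable {n : ℕ} {b : Ptn n}

/-- L1: cross pattern of a planar partition (tops vs lows). -/
lemma planar_cross (hb : Planar b) {t t' w w' : Fin n}
    (h1 : b.r (Sum.inl t) (Sum.inr w)) (h2 : b.r (Sum.inl t') (Sum.inr w'))
    (htt : t < t') (hww : w' < w) : b.r (Sum.inl t) (Sum.inl t') := by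
  refine hb (Sum.inl t) (Sum.inl t') (Sum.inr w) (Sum.inr w') ?_ ?_ ?_ h1 h2
  · simp only [ordV, Sum.elim_inl]
    exact Fin.lt_def.mp htt
  · exact ordV_inl_lt_inr _ _
  · exact ordV_inr_lt_inr hww

/-- L2 (LOWSEP): a low point of a block with a top cannot lie strictly between
two low points of another block. -/
lemma planar_lowsep (hb : Planar b) {t w z₁ z₂ : Fin n}
    (h1 : b.r (Sum.inl t) (Sum.inr w)) (h2 : b.r (Sum.inr z₁) (Sum.inr z₂))
    (hlt1 : z₁ < w) (hlt2 : w < z₂) : b.r (Sum.inl t) (Sum.inr z₂) := by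
  refine hb (Sum.inl t) (Sum.inr z₂) (Sum.inr w) (Sum.inr z₁) ?_ ?_ ?_ h1 (b.symm' h2)
  · exact ordV_inl_lt_inr _ _
  · exact ordV_inr_lt_inr hlt2
  · exact ordV_inr_lt_inr hlt1

/-- L3 (CONVTOP): top-sets of blocks of a planar full-domain partition are convex. -/
lemma planar_convtop (hb : Planar b) (hfd : FullDom b) {t t' u : Fin n}
    (h : b.r (Sum.inl t) (Sum.inl t')) (h1 : t ≤ u) (h2 : u ≤ t') :
    b.r (Sum.inl t) (Sum.inl u) := by
  rcases eq_or_lt_of_le h1 with rfl | h1'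
  · exact b.refl' _
  · rcases eq_or_lt_of_le h2 with rfl | h2'
    · exact h
    · obtain ⟨w, hw⟩ := hfd u
      refine hb (Sum.inl t) (Sum.inl u) (Sum.inl t') (Sum.inr w) ?_ ?_ ?_ h hw
      · simp only [ordV, Sum.elim_inl]
        exact Fin.lt_def.mp h1'
      · simp only [ordV, Sum.elim_inl]
        exact Fin.lt_def.mp h2'
      · exact ordV_inl_lt_inr _ _

/-- L4: lows are weakly monotone across blocks. -/
lemma planar_lows_mono (hb : Planar b) {t t' w w' : Fin n}
    (h1 : b.r (Sum.inl t) (Sum.inr w)) (h2 : b.r (Sum.inl t') (Sum.inr w'))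
    (htt : t < t') (hne : ¬ b.r (Sum.inl t) (Sum.inl t')) : w < w' := by
  rcases lt_trichotomy w w' with h | h | h
  · exact h
  · exact absurd (b.trans' h1 (h ▸ b.symm' h2)) hne
  · exact absurd (planar_cross hb h1 h2 htt h) hne

end BlockLemmas

section Straddle

variable {n : ℕ}

lemma eqvGen_iff_rtg {R : Fin n → Fin n → Prop} (hsym : ∀ x y, R x y → R y x)
    {u v : Fin n} : Relation.EqvGen R u v ↔ Relation.ReflTransGen R u v := by
  constructor
  · intro h
    induction h with
    | rel x y h => exact Relation.ReflTransGen.single h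
    | refl x => exact Relation.ReflTransGen.refl
    | symm x y _ ih =>
      exact Relation.ReflTransGen.mono (fun a c h => hsym c a h) _ _ ih.swap
    | trans x y z _ _ ih1 ih2 => exact Relation.ReflTransGen.trans ih1 ih2
  · intro h
    induction h with
    | refl => exact Relation.EqvGen.refl _
    | tail _ h ih => exact Relation.EqvGen.trans _ _ _ ih (Relation.EqvGen.rel _ _ h)

/-- Chain straddle lemma: a chain from `u < t` to `v > t` either reaches `t`
or contains a single generator step straddling `t`. -/
lemma eqvGen_straddle {R : Fin n → Fin n → Prop} (hsym : ∀ x y, R x y → R y x)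
    {u v t : Fin n} (h : Relation.EqvGen R u v) (h1 : u < t) (h2 : t < v) :
    Relation.EqvGen R u t ∨
      ∃ g g', R g g' ∧ g < t ∧ t < g' ∧ Relation.EqvGen R u g := by
  rw [eqvGen_iff_rtg hsym] at h
  have main : ∀ u, Relation.ReflTransGen R u v → u < t →
      Relation.EqvGen R u t ∨
        ∃ g g', R g g' ∧ g < t ∧ t < g' ∧ Relation.EqvGen R u g := by
    intro u h
    induction h using Relation.ReflTransGen.head_induction_on with
    | refl => intro hu; exact absurd (lt_trans hu h2) (lt_irrefl _)
    | head hac hcv ih =>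
      rename_i a c
      intro hu
      rcases lt_trichotomy c t with hct | hct | hct
      · rcases ih hct with hl | ⟨g, g', hg, hg1, hg2, hg3⟩
        · exact Or.inl (Relation.EqvGen.trans _ _ _ (Relation.EqvGen.rel _ _ hac) hl)
        · exact Or.inr ⟨g, g', hg, hg1, hg2,
            Relation.EqvGen.trans _ _ _ (Relation.EqvGen.rel _ _ hac) hg3⟩
      · exact Or.inl (hct ▸ Relation.EqvGen.rel _ _ hac)
      · exact Or.inr ⟨a, c, hac, hu, hct, Relation.EqvGen.refl _⟩
  exact main u h h1

end Straddle

section NCJoin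

variable {n : ℕ}

/-- convexity of the classes of an equivalence. -/
def ConvexCls (κ : Setoid (Fin n)) : Prop :=
  ∀ x y z : Fin n, κ.r x y → x ≤ z → z ≤ y → κ.r x z

def reachC (θ κ : Setoid (Fin n)) (c₀ p : Fin n) : Prop :=
  ∃ t, κ.r c₀ t ∧ θ.r p t

/-- Single-interval merge of `θ` with the `κ`-class of `c₀`. -/
def mergeSetoid (θ κ : Setoid (Fin n)) (c₀ : Fin n) : Setoid (Fin n) := by
  refine ⟨fun u v => θ.r u v ∨ (reachC θ κ c₀ u ∧ reachC θ κ c₀ v), ⟨?_, ?_, ?_⟩⟩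
  · exact fun u => Or.inl (θ.refl' u)
  · rintro u v (h | ⟨h1, h2⟩)
    · exact Or.inl (θ.symm' h)
    · exact Or.inr ⟨h2, h1⟩
  · rintro u v w (h | ⟨h1, h2⟩) (h' | ⟨h1', h2'⟩)
    · exact Or.inl (θ.trans' h h')
    · refine Or.inr ⟨?_, h2'⟩
      obtain ⟨t, ht1, ht2⟩ := h1'
      exact ⟨t, ht1, θ.trans' h ht2⟩
    · refine Or.inr ⟨h1, ?_⟩
      obtain ⟨t, ht1, ht2⟩ := h2
      exact ⟨t, ht1, θ.trans' (θ.symm' h') ht2⟩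
    · exact Or.inr ⟨h1, h2'⟩

/-- Removing the class of `c₀` from `κ`. -/
def prunedSetoid (κ : Setoid (Fin n)) (c₀ : Fin n) : Setoid (Fin n) := by
  refine ⟨fun u v => u = v ∨ (κ.r u v ∧ ¬ κ.r u c₀), ⟨?_, ?_, ?_⟩⟩
  · exact fun u => Or.inl rfl
  · rintro u v (rfl | ⟨h1, h2⟩)
    · exact Or.inl rfl
    · exact Or.inr ⟨κ.symm' h1, fun h => h2 (κ.trans' h1 h)⟩
  · rintro u v w (rfl | ⟨h1, h2⟩) (rfl | ⟨h1', h2'⟩)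
    · exact Or.inl rfl
    · exact Or.inr ⟨h1', h2'⟩
    · exact Or.inr ⟨h1, h2⟩
    · exact Or.inr ⟨κ.trans' h1 h1', h2⟩

variable {θ κ : Setoid (Fin n)}

lemma reachC_mono {c₀ p p' : Fin n} (h : reachC θ κ c₀ p) (h' : θ.r p p') :
    reachC θ κ c₀ p' := by
  obtain ⟨t, ht1, ht2⟩ := h
  exact ⟨t, ht1, θ.trans' (θ.symm' h') ht2⟩

lemma convex_through {c₀ t t' s : Fin n} (hconv : ConvexCls κ)
    (h1 : κ.r c₀ t) (h2 : κ.r c₀ t') (h3 : t ≤ s) (h4 : s ≤ t') : κ.r c₀ s := by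
  have htt : κ.r t t' := κ.trans' (κ.symm' h1) h2
  exact κ.trans' h1 (hconv t t' s htt h3 h4)

/-- The single merge of a non-crossing equivalence with a convex class is non-crossing. -/
lemma merge_ncross (hnc : NCross θ) (hconv : ConvexCls κ) (c₀ : Fin n) :
    NCross (mergeSetoid θ κ c₀) := by
  intro w x y z hwx hxy hyz h1 h2
  have hR : ∀ {p p'}, reachC θ κ c₀ p → θ.r p p' → reachC θ κ c₀ p' :=
    fun h h' => reachC_mono h h'
  rcases h1 with h1 | ⟨hRw, hRy⟩ <;> rcases h2 with h2 | ⟨hRx, hRz⟩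
  · exact Or.inl (hnc w x y z hwx hxy hyz h1 h2)
  · -- θ w y and reach x, reach z
    obtain ⟨tx, htx1, htx2⟩ := hRx
    obtain ⟨tz, htz1, htz2⟩ := hRz
    rcases lt_trichotomy y tx with h | h | h
    · have hθ : θ.r y tx := hnc w x y tx hwx hxy h h1 htx2
      exact Or.inr ⟨⟨tx, htx1, hθ⟩, ⟨tz, htz1, htz2⟩⟩
    · exact Or.inr ⟨⟨y, h ▸ htx1, θ.refl' y⟩, ⟨tz, htz1, htz2⟩⟩
    · rcases lt_trichotomy tz y with h' | h' | h'
      · rcases lt_trichotomy w tz with h'' | h'' | h''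
        · exact Or.inl (hnc w tz y z h'' h' hyz h1 (θ.symm' htz2))
        · exact Or.inl (θ.symm' (θ.trans' (h'' ▸ htz2) h1))
        · rcases lt_trichotomy tx w with h''' | h''' | h'''
          · have hθ : θ.r x y := hnc tx w x y h''' hwx hxy (θ.symm' htx2) h1
            exact Or.inr ⟨hR ⟨tx, htx1, htx2⟩ hθ, ⟨tz, htz1, htz2⟩⟩
          · have : κ.r c₀ w := h''' ▸ htx1
            exact Or.inr ⟨hR ⟨w, this, θ.refl' w⟩ h1, ⟨tz, htz1, htz2⟩⟩
          · have : κ.r c₀ w := convex_through hconv htz1 htx1 (le_of_lt h'') (le_of_lt h''')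
            exact Or.inr ⟨hR ⟨w, this, θ.refl' w⟩ h1, ⟨tz, htz1, htz2⟩⟩
      · exact Or.inr ⟨⟨y, h' ▸ htz1, θ.refl' y⟩, ⟨tz, htz1, htz2⟩⟩
      · have : κ.r c₀ y := convex_through hconv htx1 htz1 (le_of_lt h) (le_of_lt h')
        exact Or.inr ⟨⟨y, this, θ.refl' y⟩, ⟨tz, htz1, htz2⟩⟩
  · -- reach w, reach y and θ x z
    obtain ⟨tw, htw1, htw2⟩ := hRw
    obtain ⟨ty, hty1, hty2⟩ := hRy
    rcases lt_trichotomy ty z with h | h | h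
    · rcases lt_trichotomy ty x with h' | h' | h'
      · exact Or.inl (hnc ty x y z h' hxy hyz (θ.symm' hty2) h2)
      · exact Or.inr ⟨⟨ty, hty1, hty2⟩, hR ⟨x, h' ▸ hty1, θ.refl' x⟩ h2⟩
      · rcases lt_trichotomy tw x with h'' | h'' | h''
        · have : κ.r c₀ x := convex_through hconv htw1 hty1 (le_of_lt h'') (le_of_lt h')
          exact Or.inr ⟨⟨ty, hty1, hty2⟩, hR ⟨x, this, θ.refl' x⟩ h2⟩
        · exact Or.inr ⟨⟨ty, hty1, hty2⟩, hR ⟨x, h'' ▸ htw1, θ.refl' x⟩ h2⟩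
        · rcases lt_trichotomy tw z with h''' | h''' | h'''
          · have hθ : θ.r tw z := hnc w x tw z hwx h'' h''' htw2 h2
            exact Or.inr ⟨⟨ty, hty1, hty2⟩, hR ⟨tw, htw1, θ.refl' tw⟩ hθ⟩
          · exact Or.inr ⟨⟨ty, hty1, hty2⟩, hR ⟨tw, htw1, θ.refl' tw⟩ (h''' ▸ θ.refl' tw)⟩
          · have : κ.r c₀ z := convex_through hconv hty1 htw1 (le_of_lt h) (le_of_lt h''')
            exact Or.inr ⟨⟨ty, hty1, hty2⟩, ⟨z, this, θ.refl' z⟩⟩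
    · exact Or.inl (h ▸ hty2)
    · have hθ : θ.r z ty := hnc x y z ty hxy hyz h h2 hty2
      exact Or.inr ⟨⟨ty, hty1, hty2⟩, ⟨ty, hty1, hθ⟩⟩
  · exact Or.inr ⟨hRy, hRz⟩

open Classical in
noncomputable def movedSet (κ : Setoid (Fin n)) : Finset (Fin n) :=
  Finset.univ.filter fun y => ∃ y', κ.r y y' ∧ y ≠ y'

lemma joinNC_zero (hnc : NCross θ) (hcard : (movedSet κ).card = 0) :
    ∀ w x y z : Fin n, w < x → x < y → y < z →
      Relation.EqvGen (fun u v => θ.r u v ∨ κ.r u v) w y →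
      Relation.EqvGen (fun u v => θ.r u v ∨ κ.r u v) x z →
      Relation.EqvGen (fun u v => θ.r u v ∨ κ.r u v) y z := by
  have hκ : ∀ u v, κ.r u v → u = v := by
    intro u v h
    by_contra hne
    have : u ∈ movedSet κ := by
      simp only [movedSet, Finset.mem_filter, Finset.mem_univ, true_and]
      exact ⟨v, h, hne⟩
    rw [Finset.card_eq_zero] at hcard
    rw [hcard] at this
    exact absurd this (Finset.notMem_empty u)
  have hle : ∀ u v, Relation.EqvGen (fun u v => θ.r u v ∨ κ.r u v) u v → θ.r u v := by
    intro u v h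
    refine eqvGen_le (s := θ) ?_ u v h
    rintro p q (h' | h')
    · exact h'
    · exact (hκ p q h') ▸ θ.refl' p
  intro w x y z hwx hxy hyz h1 h2
  exact Relation.EqvGen.rel _ _ (Or.inl (hnc w x y z hwx hxy hyz (hle _ _ h1) (hle _ _ h2)))

lemma joinNC (k : ℕ) : ∀ (θ κ : Setoid (Fin n)), NCross θ → ConvexCls κ →
    (movedSet κ).card ≤ k →
    ∀ w x y z : Fin n, w < x → x < y → y < z →
      Relation.EqvGen (fun u v => θ.r u v ∨ κ.r u v) w y →
      Relation.EqvGen (fun u v => θ.r u v ∨ κ.r u v) x z →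
      Relation.EqvGen (fun u v => θ.r u v ∨ κ.r u v) y z := by
  induction k with
  | zero =>
    intro θ κ hnc hconv hcard
    exact joinNC_zero hnc (Nat.le_zero.mp hcard)
  | succ k ih =>
    intro θ κ hnc hconv hcard
    by_cases h0 : (movedSet κ).card = 0
    · exact joinNC_zero hnc h0
    · obtain ⟨c₀, hc₀⟩ := Finset.card_pos.mp (Nat.pos_of_ne_zero h0)
      set θ' := mergeSetoid θ κ c₀ with hθ'def
      set κ' := prunedSetoid κ c₀ with hκ'def
      -- the two generated relations coincide
      have hswap : ∀ u v, Relation.EqvGen (fun u v => θ.r u v ∨ κ.r u v) u v ↔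
          Relation.EqvGen (fun u v => θ'.r u v ∨ κ'.r u v) u v := by
        intro u v
        constructor
        · refine eqvGen_mono ?_ u v
          rintro p q (h | h)
          · exact Relation.EqvGen.rel _ _ (Or.inl (Or.inl h))
          · by_cases hpc : κ.r p c₀
            · refine Relation.EqvGen.rel _ _ (Or.inl (Or.inr ⟨⟨p, κ.symm' hpc, θ.refl' p⟩,
                ⟨q, κ.trans' (κ.symm' hpc) h, θ.refl' q⟩⟩))
            · exact Relation.EqvGen.rel _ _ (Or.inr (Or.inr ⟨h, hpc⟩))
        · refine eqvGen_mono ?_ u v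
          rintro p q (h | h)
          · rcases h with h | ⟨⟨t, ht1, ht2⟩, ⟨t', ht1', ht2'⟩⟩
            · exact Relation.EqvGen.rel _ _ (Or.inl h)
            · -- p ~θ t ~κ c₀ ~κ t' ~θ q
              refine Relation.EqvGen.trans _ _ _ (Relation.EqvGen.rel _ _ (Or.inl ht2)) ?_
              refine Relation.EqvGen.trans _ _ _
                (Relation.EqvGen.rel _ _ (Or.inr (κ.trans' (κ.symm' ht1) ht1'))) ?_
              exact Relation.EqvGen.symm _ _ (Relation.EqvGen.rel _ _ (Or.inl ht2'))
          · rcases h with rfl | ⟨h, _⟩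
            · exact Relation.EqvGen.refl _
            · exact Relation.EqvGen.rel _ _ (Or.inr h)
      -- cardinality drop
      have hsub : movedSet κ' ⊆ movedSet κ := by
        intro y hy
        simp only [movedSet, Finset.mem_filter, Finset.mem_univ, true_and] at hy ⊢
        obtain ⟨y', hy', hne⟩ := hy
        rcases hy' with rfl | ⟨h, _⟩
        · exact absurd rfl hne
        · exact ⟨y', h, hne⟩
      have hc₀' : c₀ ∉ movedSet κ' := by
        simp only [movedSet, Finset.mem_filter, Finset.mem_univ, true_and]
        rintro ⟨y', hy', hne⟩
        rcases hy' with rfl | ⟨h, h2⟩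
        · exact hne rfl
        · exact h2 (κ.refl' c₀)
      have hlt : (movedSet κ').card < (movedSet κ).card :=
        Finset.card_lt_card ⟨hsub, fun hss => hc₀' (hss hc₀)⟩
      have hcard' : (movedSet κ').card ≤ k := by omega
      have hnc' : NCross θ' := merge_ncross hnc hconv c₀
      have hconv' : ConvexCls κ' := by
        intro p q r h1 h2 h3
        rcases h1 with rfl | ⟨h, hc⟩
        · exact Or.inl (le_antisymm h2 h3)
        · exact Or.inr ⟨hconv p q r h h2 h3, hc⟩
      intro w x y z hwx hxy hyz h1 h2
      rw [hswap] at h1 h2 ⊢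
      exact ih θ' κ' hnc' hconv' hcard' w x y z hwx hxy hyz h1 h2

/-- NCJOIN specialised to `lamRel a b`: the middle-row relation of a product of
planar partitions is non-crossing. -/
lemma lam_ncross {a b : Ptn n} (hpa : Planar a) (hpb : Planar b) (hfdb : FullDom b)
    {w x y z : Fin n} (hwx : w < x) (hxy : x < y) (hyz : y < z)
    (h1 : lamRel a b w y) (h2 : lamRel a b x z) : lamRel a b y z := by
  have hκeq : Equivalence (fun m m' : Fin n => b.r (Sum.inl m) (Sum.inl m')) := by
    refine ⟨fun m => b.refl' _, fun h => b.symm' h, fun h h' => b.trans' h h'⟩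
  let κ : Setoid (Fin n) := ⟨fun m m' => b.r (Sum.inl m) (Sum.inl m'), hκeq⟩
  have hconv : ConvexCls κ := by
    intro p q r h1 h2 h3
    exact planar_convtop hpb hfdb h1 h2 h3
  have hnc : NCross (cokerP a) := ncross_cokerP hpa
  exact joinNC (movedSet κ).card (cokerP a) κ hnc hconv le_rfl w x y z hwx hxy hyz h1 h2

end NCJoin

section PhiStructure

variable {n : ℕ} [NeZero n] {a b : Ptn n}

lemma zeta_le_phi {y y' : Fin n} (h : (cokerP b).r y y') :
    (cokerP (pmul a b)).r y y' := by
  show (pmul a b).r (Sum.inr y) (Sum.inr y')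
  rw [Mll]
  exact Or.inl h

/-- FA': classes of the coker of a product are ζ-classes or merge un-nested ζ-classes. -/
lemma phi_cases (hpb : Planar b) {y y' : Fin n} (h : (cokerP (pmul a b)).r y y') :
    (cokerP b).r y y' ∨ (Unnested (cokerP b) y ∧ Unnested (cokerP b) y') := by
  have h' : (pmul a b).r (Sum.inr y) (Sum.inr y') := h
  rw [Mll] at h'
  rcases h' with h' | ⟨m, m', h1, _, h3⟩
  · exact Or.inl h'
  · exact Or.inr ⟨unnested_of_upper hpb h1, unnested_of_upper hpb h3⟩

/-- FC2: the φ-class of a point in a nested ζ-class is that ζ-class. -/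
lemma phi_cls_of_nested (hpb : Planar b) {y : Fin n} (h : ¬ Unnested (cokerP b) y) :
    ∀ z, (cokerP (pmul a b)).r y z ↔ (cokerP b).r y z := by
  intro z
  constructor
  · intro hz
    rcases phi_cases (a := a) hpb hz with h' | ⟨h', _⟩
    · exact h'
    · exact absurd h' h
  · exact zeta_le_phi

/-- NESTED: nested ζ-classes remain nested for φ. -/
lemma phi_nested_of_nested (hpb : Planar b) {y : Fin n}
    (h : ¬ Unnested (cokerP b) y) : ¬ Unnested (cokerP (pmul a b)) y := by
  set ζ := cokerP b with hζ
  set φ := cokerP (pmul a b) with hφ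
  have hζpl : IsPlanarEq ζ := isPlanarEq_cokerP hpb
  obtain ⟨Z, hZunn, b₁, hb₁, b₂, hb₂, hlt, hcons, hall⟩ := climb hζpl h
  intro hUn
  refine hUn b₁ ⟨b₁, φ.refl' b₁, b₂, ?_, hlt, ?_, ?_⟩
  · exact zeta_le_phi (ζ.trans' (ζ.symm' hb₁) hb₂)
  · rintro u hu ⟨hu1, hu2⟩
    by_cases hζu : ζ.r b₁ u
    · exact hcons u (ζ.trans' hb₁ hζu) ⟨hu1, hu2⟩
    · have hUb₁ : Unnested ζ b₁ := unnested_of_rel ζ hb₁ hZunn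
      have hUu : Unnested ζ u := by
        rcases phi_cases (a := a) hpb hu with h' | ⟨_, h'⟩
        · exact absurd h' hζu
        · exact h'
      rcases sep_of_unnested hζpl hζu hUb₁ hUu with hs | hs
      · have := hs b₂ (ζ.trans' (ζ.symm' hb₁) hb₂) u (ζ.refl' u)
        exact absurd hu2 (not_lt_of_gt this)
      · have := hs b₁ (ζ.refl' b₁) u (ζ.refl' u)
        exact absurd hu1 (not_lt_of_gt this)
  · intro w hw
    have hwζ : ζ.r y w := by
      rw [← phi_cls_of_nested (a := a) hpb h w]
      exact hw
    exact hall w hwζ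

lemma phi_unnested (hpb : Planar b) {y : Fin n}
    (h : Unnested (cokerP (pmul a b)) y) : Unnested (cokerP b) y := by
  by_contra h'
  exact phi_nested_of_nested (a := a) hpb h' h

/-- ANCH⊆ : anchors of φ are ζ-anchors. -/
lemma phi_anchors_sub (hpb : Planar b) {h : Fin n}
    (hh : h ∈ anchorsF (cokerP (pmul a b))) : h ∈ anchorsF (cokerP b) := by
  set ζ := cokerP b
  set φ := cokerP (pmul a b)
  simp only [anchorsF, Finset.mem_filter, Finset.mem_univ, true_and] at hh ⊢
  obtain ⟨h1, h2⟩ := hh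
  refine ⟨phi_unnested (a := a) hpb h1, ?_⟩
  have hle : minCl φ h ≤ minCl ζ h := minCl_le φ (zeta_le_phi (minCl_rel ζ h))
  rw [h2] at hle
  exact le_antisymm (minCl_le_self ζ h) hle

/-- INV : the middle relation of `d_φ · d_ζ` projects along `anchorBelow ζ` into φ. -/
lemma inv_lemma (hpb : Planar b) {m m' : Fin n}
    (h : lamRel (dEta (cokerP (pmul a b))) (dEta (cokerP b)) m m') :
    (cokerP (pmul a b)).r (anchorBelow (cokerP b) m) (anchorBelow (cokerP b) m') := by
  set ζ := cokerP b with hζdef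
  set φ := cokerP (pmul a b) with hφdef
  have hζpl : IsPlanarEq ζ := isPlanarEq_cokerP hpb
  refine eqvGen_le (s := Setoid.comap (anchorBelow ζ) φ) ?_ m m' h
  rintro p q (h' | h')
  · -- φ-step
    have hpq : φ.r p q := (dEta_ll φ p q).mp h'
    rcases phi_cases (a := a) hpb hpq with hz | ⟨hu1, hu2⟩
    · show φ.r (anchorBelow ζ p) (anchorBelow ζ q)
      rw [anchorBelow_eq_of_rel hζpl hz]
    · show φ.r (anchorBelow ζ p) (anchorBelow ζ q)
      have h1 : anchorBelow ζ p = minCl ζ p :=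
        anchorBelow_eq_minCl hζpl (minCl_mem_anchorsF_of_unnested ζ hu1)
      have h2 : anchorBelow ζ q = minCl ζ q :=
        anchorBelow_eq_minCl hζpl (minCl_mem_anchorsF_of_unnested ζ hu2)
      rw [h1, h2]
      have hp : φ.r p (minCl ζ p) := zeta_le_phi (minCl_rel ζ p)
      have hq : φ.r q (minCl ζ q) := zeta_le_phi (minCl_rel ζ q)
      exact φ.trans' (φ.symm' hp) (φ.trans' hpq hq)
  · -- kernel step of d_ζ
    have heq : anchorBelow ζ p = anchorBelow ζ q := h'
    show φ.r (anchorBelow ζ p) (anchorBelow ζ q)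
    rw [heq]

/-- G6 : `ρ(ab)·ρ(b) = ρ(ab)`. -/
lemma g6 (hpb : Planar b) :
    pmul (rhoP (pmul a b)) (rhoP b) = rhoP (pmul a b) := by
  set ζ := cokerP b with hζdef
  set φ := cokerP (pmul a b) with hφdef
  have hζpl : IsPlanarEq ζ := isPlanarEq_cokerP hpb
  show pmul (dEta φ) (dEta ζ) = dEta φ
  -- helper: an anchored point is un-nested for ζ and φ-related to its ζ-anchor
  have anchored : ∀ {c m : Fin n}, c ∈ anchorsF φ → c = minCl φ m →
      φ.r m (anchorBelow ζ m) ∧ φ.r c m := by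
    intro c m hc hcm
    have hmem : minCl φ m ∈ anchorsF φ := hcm ▸ hc
    have hUφ : Unnested φ m :=
      unnested_of_rel φ (φ.symm' (minCl_rel φ m)) (unnested_of_anchor φ hmem)
    have hUζ : Unnested ζ m := phi_unnested (a := a) hpb hUφ
    have hαζ : anchorBelow ζ m = minCl ζ m :=
      anchorBelow_eq_minCl hζpl (minCl_mem_anchorsF_of_unnested ζ hUζ)
    constructor
    · rw [hαζ]
      exact zeta_le_phi (minCl_rel ζ m)
    · apply rel_of_minCl_eq φ
      rw [← hcm, minCl_of_anchor φ hc]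
  apply Setoid.ext
  have htl : ∀ x y : Fin n,
      (pmul (dEta φ) (dEta ζ)).r (Sum.inl x) (Sum.inr y) ↔
        (dEta φ).r (Sum.inl x) (Sum.inr y) := by
    intro x y
    rw [Mtl, dEta_tl]
    constructor
    · rintro ⟨m, m', h1, h2, h3⟩
      rw [dEta_tl] at h1
      rw [dEta_tl] at h3
      obtain ⟨hmζ, hφm⟩ := anchored (anchorBelow_mem φ x) h1
      have hinv := inv_lemma (a := a) hpb h2
      -- y is ζ-related to its min which is αζ m'
      have hyζ : ζ.r y (anchorBelow ζ m') := by
        rw [h3]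
        exact minCl_rel ζ y
      have hchain : φ.r (anchorBelow φ x) y :=
        φ.trans' (φ.trans' (φ.trans' hφm hmζ) hinv) (φ.symm' (zeta_le_phi hyζ))
      rw [← minCl_of_anchor φ (anchorBelow_mem φ x), minCl_eq_of_rel φ hchain]
    · intro h
      have hmem : minCl φ y ∈ anchorsF φ := h ▸ anchorBelow_mem φ x
      have hUφ : Unnested φ y :=
        unnested_of_rel φ (φ.symm' (minCl_rel φ y)) (unnested_of_anchor φ hmem)
      have hUζ : Unnested ζ y := phi_unnested (a := a) hpb hUφ
      have hμζ : minCl ζ y ∈ anchorsF ζ := minCl_mem_anchorsF_of_unnested ζ hUζ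
      refine ⟨y, minCl ζ y, ?_, ?_, ?_⟩
      · rw [dEta_tl]; exact h
      · exact Relation.EqvGen.rel _ _ (Or.inl ((dEta_ll φ _ _).mpr
          (zeta_le_phi (minCl_rel ζ y))))
      · rw [dEta_tl, anchorBelow_of_anchor ζ hμζ]
  intro u v
  cases u with
  | inl x =>
    cases v with
    | inl x' =>
      rw [Mtt, dEta_tt]
      constructor
      · rintro (h | ⟨m, m', h1, h2, h3⟩)
        · exact h
        · rw [dEta_tl] at h1 h3
          obtain ⟨hmζ, hφm⟩ := anchored (anchorBelow_mem φ x) h1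
          obtain ⟨hmζ', hφm'⟩ := anchored (anchorBelow_mem φ x') h3
          have hinv := inv_lemma (a := a) hpb h2
          have hchain : φ.r (anchorBelow φ x) (anchorBelow φ x') :=
            φ.trans' (φ.trans' (φ.trans' (φ.trans' hφm hmζ) hinv) (φ.symm' hmζ'))
              (φ.symm' hφm')
          rw [← minCl_of_anchor φ (anchorBelow_mem φ x), minCl_eq_of_rel φ hchain,
            minCl_of_anchor φ (anchorBelow_mem φ x')]
      · exact fun h => Or.inl h
    | inr y => exact htl x y
  | inr y =>
    cases v with
    | inl x =>
      rw [symm_iff (pmul (dEta φ) (dEta ζ)), symm_iff (dEta φ)]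
      exact htl x y
    | inr y' =>
      rw [Mll, dEta_ll ζ y y', dEta_ll φ y y']
      constructor
      · rintro (h | ⟨m, m', h1, h2, h3⟩)
        · exact zeta_le_phi h
        · rw [dEta_tl] at h1 h3
          have h1' : minCl ζ y ∈ anchorsF ζ := h1 ▸ anchorBelow_mem ζ m
          have h3' : minCl ζ y' ∈ anchorsF ζ := h3 ▸ anchorBelow_mem ζ m'
          have hinv := inv_lemma (a := a) hpb h2
          have hy : φ.r y (anchorBelow ζ m) := by
            rw [h1]
            exact zeta_le_phi (minCl_rel ζ y)
          have hy' : φ.r y' (anchorBelow ζ m') := by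
            rw [h3]
            exact zeta_le_phi (minCl_rel ζ y')
          exact φ.trans' (φ.trans' hy hinv) (φ.symm' hy')
      · intro h
        rcases phi_cases (a := a) hpb h with hz | ⟨hu1, hu2⟩
        · exact Or.inl hz
        · have hμ1 : minCl ζ y ∈ anchorsF ζ := minCl_mem_anchorsF_of_unnested ζ hu1
          have hμ2 : minCl ζ y' ∈ anchorsF ζ := minCl_mem_anchorsF_of_unnested ζ hu2
          refine Or.inr ⟨minCl ζ y, minCl ζ y', ?_, ?_, ?_⟩
          · rw [dEta_tl, anchorBelow_of_anchor ζ hμ1]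
          · refine Relation.EqvGen.trans _ _ _ (Relation.EqvGen.rel _ _ (Or.inl
              ((dEta_ll φ _ _).mpr (φ.symm' (zeta_le_phi (minCl_rel ζ y)))))) ?_
            refine Relation.EqvGen.trans _ _ _ (Relation.EqvGen.rel _ _ (Or.inl
              ((dEta_ll φ _ _).mpr h))) ?_
            exact Relation.EqvGen.rel _ _ (Or.inl ((dEta_ll φ _ _).mpr
              (zeta_le_phi (minCl_rel ζ y'))))
          · rw [dEta_tl, anchorBelow_of_anchor ζ hμ2]
  done

end PhiStructure

section Q3

variable {n : ℕ} [NeZero n] {a b : Ptn n}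

lemma top_lt_of_low_lt (hpb : Planar b) {t s p q : Fin n}
    (h1 : b.r (Sum.inl t) (Sum.inr p)) (h2 : b.r (Sum.inl s) (Sum.inr q))
    (hpq : p < q) (hne : ¬ b.r (Sum.inl t) (Sum.inl s)) : t < s := by
  rcases lt_trichotomy t s with h | h | h
  · exact h
  · exact absurd (h ▸ b.refl' (Sum.inl t)) hne
  · exact absurd (b.symm' (planar_cross hpb h2 h1 h hpq)) hne

/-- Q3: the cokernel of a product of planar partitions is non-crossing. -/
lemma ncross_phi (hpa : Planar a) (hpb : Planar b) (hfb : FullDom b) :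
    NCross (cokerP (pmul a b)) := by
  set ζ := cokerP b with hζdef
  set φ := cokerP (pmul a b) with hφdef
  have hchain : ∀ {p q m m' : Fin n}, b.r (Sum.inl m) (Sum.inr p) → lamRel a b m m' →
      b.r (Sum.inl m') (Sum.inr q) → φ.r p q := by
    intro p q m m' h1 h2 h3
    show (pmul a b).r (Sum.inr p) (Sum.inr q)
    rw [Mll]
    exact Or.inr ⟨m, m', h1, h2, h3⟩
  intro w x y z hwx hxy hyz h1 h2
  have h1' : (pmul a b).r (Sum.inr w) (Sum.inr y) := h1
  have h2' : (pmul a b).r (Sum.inr x) (Sum.inr z) := h2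
  rw [Mll] at h1' h2'
  rcases h1' with hζwy | ⟨m₁, m₁', hw, hl1, hy⟩
  · rcases h2' with hζxz | ⟨m₂, m₂', hx, hl2, hz⟩
    · -- both ζ
      exact zeta_le_phi (ncross_cokerP hpb w x y z hwx hxy hyz hζwy hζxz)
    · -- ζ w y, chain x z : x's block meets cls {w,y}
      have hsep := planar_lowsep hpb hx hζwy hwx hxy
      have hζxy : ζ.r x y := b.trans' (b.symm' hx) hsep
      exact φ.trans' (φ.symm' (zeta_le_phi hζxy)) (hchain hx hl2 hz)
  · rcases h2' with hζxz | ⟨m₂, m₂', hx, hl2, hz⟩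
    · -- chain w y, ζ x z : y's block meets cls {x,z}
      have hsep := planar_lowsep hpb hy hζxz hxy hyz
      have hζyz : ζ.r y z := b.trans' (b.symm' hy) hsep
      exact zeta_le_phi hζyz
    · -- both chains
      by_cases hYZ : b.r (Sum.inl m₁') (Sum.inl m₂')
      · exact zeta_le_phi (b.trans' (b.symm' hy) (b.trans' hYZ hz))
      · by_cases hXY : b.r (Sum.inl m₂) (Sum.inl m₁')
        · have hζxy : ζ.r x y := b.trans' (b.symm' hx) (b.trans' hXY hy)
          exact φ.trans' (φ.symm' (zeta_le_phi hζxy)) (hchain hx hl2 hz)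
        · by_cases hWX : b.r (Sum.inl m₁) (Sum.inl m₂)
          · have hζwx : ζ.r w x := b.trans' (b.symm' hw) (b.trans' hWX hx)
            exact φ.trans' (φ.symm' (hchain hw hl1 hy))
              (φ.trans' (zeta_le_phi hζwx) (hchain hx hl2 hz))
          · have ht1 : m₁ < m₂ := top_lt_of_low_lt hpb hw hx hwx hWX
            have ht2 : m₂ < m₁' := top_lt_of_low_lt hpb hx hy hxy hXY
            have ht3 : m₁' < m₂' := top_lt_of_low_lt hpb hy hz hyz hYZ
            have hlam := lam_ncross hpa hpb hfb ht1 ht2 ht3 hl1 hl2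
            exact hchain hy hlam hz

lemma isPlanarEq_phi (hpa : Planar a) (hpb : Planar b) (hfb : FullDom b) :
    IsPlanarEq (cokerP (pmul a b)) :=
  isPlanarEq_of_ncross (ncross_phi hpa hpb hfb)

end Q3

section G8sec

variable {n : ℕ} [NeZero n] {a b : Ptn n}

noncomputable def blow (b : Ptn n) (hfb : FullDom b) (m : Fin n) : Fin n :=
  (hfb m).choose

lemma blow_spec (hfb : FullDom b) (m : Fin n) :
    b.r (Sum.inl m) (Sum.inr (blow b hfb m)) := (hfb m).choose_spec

lemma lam_symm_gen :
    ∀ x y : Fin n, (fun m m' => a.r (Sum.inr m) (Sum.inr m') ∨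
      b.r (Sum.inl m) (Sum.inl m')) x y →
      (fun m m' => a.r (Sum.inr m) (Sum.inr m') ∨ b.r (Sum.inl m) (Sum.inl m')) y x := by
  rintro x y (h | h)
  · exact Or.inl (a.symm' h)
  · exact Or.inr (b.symm' h)

/-- FACT D, forward: `lam`-related middle points have φ-related lows. -/
lemma factD_fwd (hfb : FullDom b) {m m' : Fin n} (h : lamRel a b m m') :
    (cokerP (pmul a b)).r (blow b hfb m) (blow b hfb m') := by
  refine eqvGen_le (s := Setoid.comap (blow b hfb) (cokerP (pmul a b))) ?_ m m' h
  rintro p q (h' | h')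
  · show (pmul a b).r (Sum.inr (blow b hfb p)) (Sum.inr (blow b hfb q))
    rw [Mll]
    exact Or.inr ⟨p, q, blow_spec hfb p, lam_of_coker h', blow_spec hfb q⟩
  · exact zeta_le_phi (b.trans' (b.symm' (blow_spec hfb p)) (b.trans' h' (blow_spec hfb q)))

/-- FACT D, backward. -/
lemma factD_bwd (hfb : FullDom b) {c c' : Fin n}
    (h : (cokerP (pmul a b)).r (blow b hfb c) (blow b hfb c')) :
    lamRel a b c c' := by
  have h' : (pmul a b).r (Sum.inr (blow b hfb c)) (Sum.inr (blow b hfb c')) := h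
  rw [Mll] at h'
  rcases h' with h' | ⟨m, m', h1, h2, h3⟩
  · exact lam_of_kerb (b.trans' (blow_spec hfb c) (b.trans' h' (b.symm' (blow_spec hfb c'))))
  · have hl : lamRel a b c m :=
      lam_of_kerb (b.trans' (blow_spec hfb c) (b.symm' h1))
    have hr : lamRel a b m' c' :=
      lam_of_kerb (b.trans' h3 (b.symm' (blow_spec hfb c')))
    exact lam_trans hl (lam_trans h2 hr)

/-- KEY2: the φ-class of the low of an ε-anchor is un-nested. -/
lemma key2 (hpa : Planar a) (hpb : Planar b) (hfb : FullDom b) {c : Fin n}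
    (hc : c ∈ anchorsF (cokerP a)) :
    Unnested (cokerP (pmul a b)) (blow b hfb c) := by
  set ε := cokerP a with hεdef
  set ζ := cokerP b with hζdef
  set φ := cokerP (pmul a b) with hφdef
  have hεpl : IsPlanarEq ε := isPlanarEq_cokerP hpa
  set w := blow b hfb c with hwdef
  have hw : b.r (Sum.inl c) (Sum.inr w) := blow_spec hfb c
  rintro v ⟨b₁, hb₁, b₂, hb₂, hlt, hcons, hall⟩
  have hw12 : b₁ < w ∧ w < b₂ := hall w (φ.refl' w)
  have hb₁b₂ : φ.r b₁ b₂ := φ.trans' (φ.symm' hb₁) hb₂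
  -- a contradiction machine: any member of the class of `w` is strictly inside (b₁,b₂)
  have hmachine : ∀ u, φ.r w u → b₁ < u ∧ u < b₂ := fun u hu => hall u hu
  by_cases hζ12 : ζ.r b₁ b₂
  · -- LOWSEP
    have := planar_lowsep hpb hw hζ12 hw12.1 hw12.2
    have hφ : φ.r w b₂ := zeta_le_phi (b.trans' (b.symm' hw) this)
    exact absurd (hmachine b₂ hφ).2 (lt_irrefl _)
  · -- non-ζ merge: unfold the chain
    have hb' : (pmul a b).r (Sum.inr b₁) (Sum.inr b₂) := hb₁b₂
    rw [Mll] at hb'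
    rcases hb' with hb' | ⟨t₁, t₂, h1, hl, h3⟩
    · exact hζ12 hb'
    · -- tops straddle c
      have hne₁ : ¬ b.r (Sum.inl t₁) (Sum.inl c) := by
        intro hcc
        have : ζ.r w b₁ :=
          b.trans' (b.symm' hw) (b.trans' (b.symm' hcc) h1)
        exact absurd (hmachine b₁ (zeta_le_phi this)).1 (lt_irrefl _)
      have hne₂ : ¬ b.r (Sum.inl c) (Sum.inl t₂) := by
        intro hcc
        have : ζ.r w b₂ :=
          b.trans' (b.symm' hw) (b.trans' hcc h3)
        exact absurd (hmachine b₂ (zeta_le_phi this)).2 (lt_irrefl _)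
      have ht₁ : t₁ < c := top_lt_of_low_lt hpb h1 hw hw12.1 hne₁
      have ht₂ : c < t₂ := top_lt_of_low_lt hpb hw h3 hw12.2 hne₂
      -- straddle the chain at c
      have hcontra : ∀ (hl' : lamRel a b t₁ c), False := by
        intro hl'
        have hφ : φ.r b₁ w := by
          show (pmul a b).r (Sum.inr b₁) (Sum.inr w)
          rw [Mll]
          exact Or.inr ⟨t₁, c, h1, hl', hw⟩
        exact absurd (hmachine b₁ (φ.symm' hφ)).1 (lt_irrefl _)
      rcases eqvGen_straddle lam_symm_gen hl ht₁ ht₂ with hstr | ⟨g, g', hg, hg1, hg2, hg3⟩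
      · exact hcontra hstr
      · rcases hg with hg | hg
        · -- ε-step across the anchor c : contradiction with CORE
          have hmin : minCl ε g' ≤ g := minCl_le ε (ε.symm' hg)
          exact core_no_anchor hεpl hc (lt_of_le_of_lt hmin hg1) (le_of_lt hg2)
        · -- b-top step across c : convexity gives `lam t₁ c`
          have hgc : b.r (Sum.inl g) (Sum.inl c) :=
            planar_convtop hpb hfb hg (le_of_lt hg1) (le_of_lt hg2)
          exact hcontra (lam_trans hg3 (lam_of_kerb hgc))

/-- `anchorBelow φ` at the low of an ε-anchor equals the min of its class. -/
lemma key2' (hpa : Planar a) (hpb : Planar b) (hfb : FullDom b) {c : Fin n}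
    (hc : c ∈ anchorsF (cokerP a)) :
    anchorBelow (cokerP (pmul a b)) (blow b hfb c) =
      minCl (cokerP (pmul a b)) (blow b hfb c) :=
  anchorBelow_eq_minCl (isPlanarEq_phi hpa hpb hfb)
    (minCl_mem_anchorsF_of_unnested _ (key2 hpa hpb hfb hc))

/-- BRIDGE: `αφ (blow x) = αφ (blow (αε x))`. -/
lemma bridge (hpa : Planar a) (hfa : FullDom a) (hpb : Planar b) (hfb : FullDom b)
    (x : Fin n) :
    anchorBelow (cokerP (pmul a b)) (blow b hfb x) =
      anchorBelow (cokerP (pmul a b)) (blow b hfb (anchorBelow (cokerP a) x)) := by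
  set ε := cokerP a with hεdef
  set φ := cokerP (pmul a b) with hφdef
  have hεpl : IsPlanarEq ε := isPlanarEq_cokerP hpa
  have hφpl : IsPlanarEq φ := isPlanarEq_phi hpa hpb hfb
  set c := anchorBelow ε x with hcdef
  have hcanch : c ∈ anchorsF ε := anchorBelow_mem ε x
  by_cases hsame : b.r (Sum.inl c) (Sum.inl x)
  · -- same block
    have : (cokerP b).r (blow b hfb c) (blow b hfb x) :=
      b.trans' (b.symm' (blow_spec hfb c)) (b.trans' hsame (blow_spec hfb x))
    exact (anchorBelow_eq_of_rel hφpl (zeta_le_phi this)).symm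
  · have hcx : c < x := by
      rcases lt_or_eq_of_le (anchorBelow_le ε x) with h | h
      · exact h
      · exact absurd (h ▸ b.refl' (Sum.inl c)) hsame
    have hblt : blow b hfb c < blow b hfb x :=
      planar_lows_mono hpb (blow_spec hfb c) (blow_spec hfb x) hcx hsame
    refine le_antisymm ?_ (anchorBelow_mono φ (le_of_lt hblt))
    -- use FACT E: x ≤ maxCl ε c
    set β := maxCl ε c with hβdef
    have hxβ : x ≤ β := le_maxCl_anchorBelow hεpl x
    have hεcβ : ε.r c β := maxCl_rel ε c
    have hφcβ : φ.r (blow b hfb c) (blow b hfb β) :=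
      factD_fwd hfb (lam_of_coker hεcβ)
    by_cases hxb : b.r (Sum.inl x) (Sum.inl β)
    · -- x in block of β : direct transfer
      have : (cokerP b).r (blow b hfb x) (blow b hfb β) :=
        b.trans' (b.symm' (blow_spec hfb x)) (b.trans' hxb (blow_spec hfb β))
      rw [anchorBelow_eq_of_rel hφpl (zeta_le_phi this),
        anchorBelow_eq_of_rel hφpl hφcβ]
    · have hxβ' : x < β := by
        rcases lt_or_eq_of_le hxβ with h | h
        · exact h
        · exact absurd (h ▸ b.refl' (Sum.inl x)) hxb
      have hblt' : blow b hfb x < blow b hfb β :=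
        planar_lows_mono hpb (blow_spec hfb x) (blow_spec hfb β) hxβ' hxb
      -- every φ-anchor ≤ blow β is ≤ minCl φ (blow c)
      by_contra hgt
      push_neg at hgt
      have hanch : anchorBelow φ (blow b hfb x) ∈ anchorsF φ := anchorBelow_mem φ _
      have h1 : minCl φ (blow b hfb β) < anchorBelow φ (blow b hfb x) := by
        rw [← minCl_eq_of_rel φ hφcβ, ← key2' hpa hpb hfb hcanch]
        exact hgt
      have h2 : anchorBelow φ (blow b hfb x) ≤ blow b hfb β :=
        le_trans (anchorBelow_le φ _) (le_of_lt hblt')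
      exact core_no_anchor hφpl hanch h1 h2

end G8sec

section G8Assemble

variable {n : ℕ} [NeZero n] {a b : Ptn n}

lemma lam_dEta_right' {φ : Setoid (Fin n)} (hpl : IsPlanarEq φ)
    (hle : ∀ u v, (cokerP b) u v → φ.r u v) (m m' : Fin n) :
    lamRel b (dEta φ) m m' ↔ anchorBelow φ m = anchorBelow φ m' := by
  constructor
  · intro h
    refine eqvGen_le (s := Setoid.ker (anchorBelow φ)) ?_ m m' h
    rintro u v (h' | h')
    · exact anchorBelow_eq_of_rel hpl (hle u v h')
    · exact h'
  · intro h
    exact Relation.EqvGen.rel _ _ (Or.inr h)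

/-- G8 : `ρ(a) b = b ρ(ab)`. -/
lemma g8 (hfa : FullDom a) (hpa : Planar a) (hfb : FullDom b) (hpb : Planar b) :
    pmul (rhoP a) b = pmul b (rhoP (pmul a b)) := by
  set ε := cokerP a with hεdef
  set φ := cokerP (pmul a b) with hφdef
  have hεpl : IsPlanarEq ε := isPlanarEq_cokerP hpa
  have hφpl : IsPlanarEq φ := isPlanarEq_phi hpa hpb hfb
  have hc : cokerP (dEta ε) = cokerP a := cokerP_dEta ε
  have hlameq : ∀ m m', lamRel (dEta ε) b m m' ↔ lamRel a b m m' :=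
    fun m m' => lam_congr hc m m'
  have hC : cokerP (pmul (dEta ε) b) = φ := coker_dep hc
  have hKR : ∀ m m', lamRel b (dEta φ) m m' ↔ anchorBelow φ m = anchorBelow φ m' :=
    lam_dEta_right' hφpl (fun u v h => zeta_le_phi h)
  -- the key pointwise bridge
  have combo : ∀ x : Fin n, anchorBelow φ (blow b hfb x) =
      minCl φ (blow b hfb (anchorBelow ε x)) := by
    intro x
    rw [bridge hpa hfa hpb hfb x, key2' hpa hpb hfb (anchorBelow_mem ε x)]
  -- main equivalence (I)
  have mainI : ∀ x x' : Fin n,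
      lamRel a b (anchorBelow ε x) (anchorBelow ε x') ↔
        anchorBelow φ (blow b hfb x) = anchorBelow φ (blow b hfb x') := by
    intro x x'
    constructor
    · intro h
      have := factD_fwd hfb h
      rw [combo, combo]
      exact minCl_eq_of_rel φ this
    · intro h
      rw [combo, combo] at h
      exact factD_bwd hfb (rel_of_minCl_eq φ h)
  -- main equivalence (II)
  have mainII : ∀ x y : Fin n,
      (∃ m', lamRel a b (anchorBelow ε x) m' ∧ b.r (Sum.inl m') (Sum.inr y)) ↔
        anchorBelow φ (blow b hfb x) = minCl φ y := by
    intro x y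
    constructor
    · rintro ⟨m', hl, hm'⟩
      have hφcy : φ.r (blow b hfb (anchorBelow ε x)) y := by
        show (pmul a b).r _ _
        rw [Mll]
        exact Or.inr ⟨anchorBelow ε x, m', blow_spec hfb _, hl, hm'⟩
      rw [combo, minCl_eq_of_rel φ hφcy]
    · intro h
      rw [combo] at h
      have hφcy : φ.r (blow b hfb (anchorBelow ε x)) y := rel_of_minCl_eq φ h
      have hφcy' : (pmul a b).r (Sum.inr (blow b hfb (anchorBelow ε x))) (Sum.inr y) := hφcy
      rw [Mll] at hφcy'
      rcases hφcy' with h' | ⟨m, m', hm, hlam, hm'⟩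
      · exact ⟨anchorBelow ε x, lam_refl _, b.trans' (blow_spec hfb _) h'⟩
      · exact ⟨m', lam_trans (lam_of_kerb (b.trans' (blow_spec hfb _) (b.symm' hm))) hlam,
          hm'⟩
  show pmul (dEta ε) b = pmul b (dEta φ)
  apply Setoid.ext
  have htl : ∀ x y : Fin n,
      (pmul (dEta ε) b).r (Sum.inl x) (Sum.inr y) ↔
        (pmul b (dEta φ)).r (Sum.inl x) (Sum.inr y) := by
    intro x y
    rw [Mtl, Mtl]
    constructor
    · rintro ⟨m, m', h1, h2, h3⟩
      rw [dEta_tl] at h1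
      have hεrel : ε.r (anchorBelow ε x) m := (anchorBelow_eq_minCl_iff ε x m).mp h1
      have hl : lamRel a b (anchorBelow ε x) m' :=
        lam_trans (lam_of_coker hεrel) ((hlameq m m').mp h2)
      have hg : anchorBelow φ (blow b hfb x) = minCl φ y := (mainII x y).mp ⟨m', hl, h3⟩
      refine ⟨blow b hfb x, blow b hfb x, blow_spec hfb x, lam_refl _, ?_⟩
      rw [dEta_tl]
      exact hg
    · rintro ⟨m, m', h1, h2, h3⟩
      rw [dEta_tl] at h3
      rw [hKR] at h2
      have hζm : (cokerP b).r m (blow b hfb x) :=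
        b.trans' (b.symm' h1) (blow_spec hfb x)
      have hαm : anchorBelow φ m = anchorBelow φ (blow b hfb x) :=
        anchorBelow_eq_of_rel hφpl (zeta_le_phi hζm)
      have hg : anchorBelow φ (blow b hfb x) = minCl φ y := by
        rw [← hαm, h2]; exact h3
      obtain ⟨m', hl, hm'⟩ := (mainII x y).mpr hg
      refine ⟨anchorBelow ε x, m', ?_, (hlameq _ _).mpr hl, hm'⟩
      rw [dEta_tl, minCl_of_anchor ε (anchorBelow_mem ε x)]
  intro u v
  cases u with
  | inl x =>
    cases v with
    | inl x' =>
      rw [Mtt, Mtt]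
      constructor
      · rintro (h | ⟨m, m', h1, h2, h3⟩)
        · -- αε x = αε x'
          have h' : anchorBelow ε x = anchorBelow ε x' := h
          have : lamRel a b (anchorBelow ε x) (anchorBelow ε x') := by
            rw [h']; exact lam_refl _
          have hg := (mainI x x').mp this
          exact Or.inr ⟨blow b hfb x, blow b hfb x', blow_spec hfb x,
            (hKR _ _).mpr hg, blow_spec hfb x'⟩
        · rw [dEta_tl] at h1 h3
          have hε1 : ε.r (anchorBelow ε x) m := (anchorBelow_eq_minCl_iff ε x m).mp h1
          have hε2 : ε.r (anchorBelow ε x') m' := (anchorBelow_eq_minCl_iff ε x' m').mp h3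
          have hl : lamRel a b (anchorBelow ε x) (anchorBelow ε x') :=
            lam_trans (lam_of_coker hε1) (lam_trans ((hlameq m m').mp h2)
              (lam_symm (lam_of_coker hε2)))
          have hg := (mainI x x').mp hl
          exact Or.inr ⟨blow b hfb x, blow b hfb x', blow_spec hfb x,
            (hKR _ _).mpr hg, blow_spec hfb x'⟩
      · rintro (h | ⟨m, m', h1, h2, h3⟩)
        · -- b.r (inl x)(inl x')
          have hζ : (cokerP b).r (blow b hfb x) (blow b hfb x') :=
            b.trans' (b.symm' (blow_spec hfb x)) (b.trans' h (blow_spec hfb x'))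
          have hg : anchorBelow φ (blow b hfb x) = anchorBelow φ (blow b hfb x') :=
            anchorBelow_eq_of_rel hφpl (zeta_le_phi hζ)
          have hl := (mainI x x').mpr hg
          exact Or.inr ⟨anchorBelow ε x, anchorBelow ε x',
            (dEta_tl ε x _).mpr (minCl_of_anchor ε (anchorBelow_mem ε x)).symm,
            (hlameq _ _).mpr hl,
            (dEta_tl ε x' _).mpr (minCl_of_anchor ε (anchorBelow_mem ε x')).symm⟩
        · rw [hKR] at h2
          have hζ1 : (cokerP b).r m (blow b hfb x) :=
            b.trans' (b.symm' h1) (blow_spec hfb x)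
          have hζ2 : (cokerP b).r m' (blow b hfb x') :=
            b.trans' (b.symm' h3) (blow_spec hfb x')
          have hg : anchorBelow φ (blow b hfb x) = anchorBelow φ (blow b hfb x') := by
            rw [← anchorBelow_eq_of_rel hφpl (zeta_le_phi hζ1),
              ← anchorBelow_eq_of_rel hφpl (zeta_le_phi hζ2)]
            exact h2
          have hl := (mainI x x').mpr hg
          exact Or.inr ⟨anchorBelow ε x, anchorBelow ε x',
            (dEta_tl ε x _).mpr (minCl_of_anchor ε (anchorBelow_mem ε x)).symm,
            (hlameq _ _).mpr hl,
            (dEta_tl ε x' _).mpr (minCl_of_anchor ε (anchorBelow_mem ε x')).symm⟩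
    | inr y => exact htl x y
  | inr y =>
    cases v with
    | inl x =>
      rw [symm_iff (pmul (dEta ε) b), symm_iff (pmul b (dEta φ))]
      exact htl x y
    | inr y' =>
      have hL : (pmul (dEta ε) b).r (Sum.inr y) (Sum.inr y') ↔ φ.r y y' := by
        show (cokerP (pmul (dEta ε) b)).r y y' ↔ φ.r y y'
        rw [hC]
      rw [hL, Mll]
      constructor
      · intro h
        exact Or.inl ((dEta_ll φ y y').mpr h)
      · rintro (h | ⟨m, m', h1, h2, h3⟩)
        · exact (dEta_ll φ y y').mp h
        · rw [dEta_tl] at h1 h3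
          rw [hKR] at h2
          apply rel_of_minCl_eq φ
          rw [← h1, h2, h3]
  done

end G8Assemble

section AssocLeft

variable {n : ℕ} {a b c : Ptn n}

/-- the two-middle-rows relation for a triple product. -/
def gen2 (a b c : Ptn n) : (Fin n ⊕ Fin n) → (Fin n ⊕ Fin n) → Prop
  | Sum.inl m, Sum.inl m' => a.r (Sum.inr m) (Sum.inr m') ∨ b.r (Sum.inl m) (Sum.inl m')
  | Sum.inl m, Sum.inr k => b.r (Sum.inl m) (Sum.inr k)
  | Sum.inr k, Sum.inl m => b.r (Sum.inl m) (Sum.inr k)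
  | Sum.inr k, Sum.inr k' => b.r (Sum.inr k) (Sum.inr k') ∨ c.r (Sum.inl k) (Sum.inl k')

def Lam2 (a b c : Ptn n) := Relation.EqvGen (gen2 a b c)

lemma gen2_symm : ∀ u v, gen2 a b c u v → gen2 a b c v u := by
  rintro (m | k) (m' | k') h
  · rcases h with h | h
    · exact Or.inl (a.symm' h)
    · exact Or.inr (b.symm' h)
  · exact h
  · exact h
  · rcases h with h | h
    · exact Or.inl (b.symm' h)
    · exact Or.inr (c.symm' h)

/-- left-bracketing mid-row relations -/
def tII (a b c : Ptn n) (m m' : Fin n) : Prop :=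
  lamRel a b m m' ∨ ∃ m₂ m₃ k k', lamRel a b m m₂ ∧ b.r (Sum.inl m₂) (Sum.inr k) ∧
    lamRel (pmul a b) c k k' ∧ b.r (Sum.inl m₃) (Sum.inr k') ∧ lamRel a b m₃ m'

def tIX (a b c : Ptn n) (m k : Fin n) : Prop :=
  ∃ m₂ k', lamRel a b m m₂ ∧ b.r (Sum.inl m₂) (Sum.inr k') ∧ lamRel (pmul a b) c k' k

def T2 (a b c : Ptn n) : (Fin n ⊕ Fin n) → (Fin n ⊕ Fin n) → Prop
  | Sum.inl m, Sum.inl m' => tII a b c m m'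
  | Sum.inl m, Sum.inr k => tIX a b c m k
  | Sum.inr k, Sum.inl m => tIX a b c m k
  | Sum.inr k, Sum.inr k' => lamRel (pmul a b) c k k'

-- absorption facts
lemma lPc_of_rb {k k' : Fin n} (h : b.r (Sum.inr k) (Sum.inr k')) :
    lamRel (pmul a b) c k k' := by
  apply lam_of_coker
  show (pmul a b).r (Sum.inr k) (Sum.inr k')
  rw [Mll]; exact Or.inl h

lemma lPc_absorb {m₂ m₃ k k' : Fin n} (h1 : b.r (Sum.inl m₂) (Sum.inr k))
    (h2 : lamRel a b m₂ m₃) (h3 : b.r (Sum.inl m₃) (Sum.inr k')) :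
    lamRel (pmul a b) c k k' := by
  apply lam_of_coker
  show (pmul a b).r (Sum.inr k) (Sum.inr k')
  rw [Mll]; exact Or.inr ⟨m₂, m₃, h1, h2, h3⟩

lemma lPc_of_k2 {k k' : Fin n} (h : lamRel b c k k') : lamRel (pmul a b) c k k' := by
  refine eqvGen_mono ?_ k k' h
  rintro p q (h' | h')
  · exact lPc_of_rb h'
  · exact lam_of_kerb h'

lemma T2_refl (u : Fin n ⊕ Fin n) : T2 a b c u u := by
  cases u with
  | inl m => exact Or.inl (lam_refl m)
  | inr k => exact lam_refl k

lemma T2_symm {u v : Fin n ⊕ Fin n} (h : T2 a b c u v) : T2 a b c v u := by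
  cases u with
  | inl m =>
    cases v with
    | inl m' =>
      rcases h with h | ⟨m₂, m₃, k, k', h1, h2, h3, h4, h5⟩
      · exact Or.inl (lam_symm h)
      · exact Or.inr ⟨m₃, m₂, k', k, lam_symm h5, h4, lam_symm h3, h2, lam_symm h1⟩
    | inr k => exact h
  | inr k =>
    cases v with
    | inl m => exact h
    | inr k' => exact lam_symm h

lemma T2_trans {u v w : Fin n ⊕ Fin n} (h : T2 a b c u v) (h' : T2 a b c v w) :
    T2 a b c u w := by
  cases u with
  | inl m =>
    cases v with
    | inl m' =>
      cases w with
      | inl m'' =>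
        -- II ∘ II
        rcases h with h | ⟨m₂, m₃, k, k', h1, h2, h3, h4, h5⟩
        · rcases h' with h' | ⟨m₄, m₅, l, l', g1, g2, g3, g4, g5⟩
          · exact Or.inl (lam_trans h h')
          · exact Or.inr ⟨m₄, m₅, l, l', lam_trans h g1, g2, g3, g4, g5⟩
        · rcases h' with h' | ⟨m₄, m₅, l, l', g1, g2, g3, g4, g5⟩
          · exact Or.inr ⟨m₂, m₃, k, k', h1, h2, h3, h4, lam_trans h5 h'⟩
          · refine Or.inr ⟨m₂, m₅, k, l', h1, h2, ?_, g4, g5⟩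
            have hmid : lamRel (pmul a b) c k' l :=
              lPc_absorb h4 (lam_trans h5 g1) g2
            exact lam_trans h3 (lam_trans hmid g3)
      | inr kk =>
        -- II ∘ IX
        obtain ⟨m₄, l', g1, g2, g3⟩ := h'
        rcases h with h | ⟨m₂, m₃, k, k', h1, h2, h3, h4, h5⟩
        · exact ⟨m₄, l', lam_trans h g1, g2, g3⟩
        · refine ⟨m₂, k, h1, h2, ?_⟩
          have hmid : lamRel (pmul a b) c k' l' :=
            lPc_absorb h4 (lam_trans h5 g1) g2
          exact lam_trans h3 (lam_trans hmid g3)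
    | inr k =>
      cases w with
      | inl m' =>
        -- IX ∘ XI : produce II
        obtain ⟨m₂, k₂, h1, h2, h3⟩ := h
        obtain ⟨m₃, k₃, g1, g2, g3⟩ := h'
        exact Or.inr ⟨m₂, m₃, k₂, k₃, h1, h2,
          lam_trans h3 (lam_symm g3), g2, lam_symm g1⟩
      | inr k' =>
        -- IX ∘ XX
        obtain ⟨m₂, k₂, h1, h2, h3⟩ := h
        exact ⟨m₂, k₂, h1, h2, lam_trans h3 h'⟩
  | inr k =>
    cases v with
    | inl m =>
      cases w with
      | inl m' =>
        -- XI ∘ II : produce XI (tIX m' k)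
        obtain ⟨m₂, k₂, h1, h2, h3⟩ := h
        rcases h' with h' | ⟨m₄, m₅, l, l', g1, g2, g3, g4, g5⟩
        · exact ⟨m₂, k₂, lam_trans (lam_symm h') h1, h2, h3⟩
        · refine ⟨m₅, l', lam_symm g5, g4, ?_⟩
          have hmid : lamRel (pmul a b) c l k₂ :=
            lPc_absorb g2 (lam_trans (lam_symm g1) h1) h2
          exact lam_trans (lam_symm g3) (lam_trans hmid h3)
      | inr k' =>
        -- XI ∘ IX : produce XX
        obtain ⟨m₂, k₂, h1, h2, h3⟩ := h
        obtain ⟨m₃, k₃, g1, g2, g3⟩ := h'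
        have hmid : lamRel (pmul a b) c k₂ k₃ :=
          lPc_absorb h2 (lam_trans (lam_symm h1) g1) g2
        exact lam_trans (lam_symm h3) (lam_trans hmid g3)
    | inr k₂ =>
      cases w with
      | inl m =>
        -- XX ∘ XI
        obtain ⟨m₂, k₃, g1, g2, g3⟩ := h'
        exact ⟨m₂, k₃, g1, g2, lam_trans g3 (lam_symm h)⟩
      | inr k' => exact lam_trans h h'

def T2Setoid (a b c : Ptn n) : Setoid (Fin n ⊕ Fin n) :=
  ⟨T2 a b c, ⟨T2_refl, T2_symm, T2_trans⟩⟩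

lemma gen2_le_T2 : ∀ u v, gen2 a b c u v → T2 a b c u v := by
  rintro (m | k) (m' | k') h
  · rcases h with h | h
    · exact Or.inl (lam_of_coker h)
    · exact Or.inl (lam_of_kerb h)
  · exact ⟨m, k', lam_refl m, h, lam_refl k'⟩
  · exact ⟨m', k, lam_refl m', h, lam_refl k⟩
  · rcases h with h | h
    · exact lPc_of_rb h
    · exact Relation.EqvGen.rel _ _ (Or.inr h)

lemma eqvGen_map {α β : Type*} (f : α → β) {R : α → α → Prop} {R' : β → β → Prop}
    (h : ∀ x y, R x y → Relation.EqvGen R' (f x) (f y)) :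
    ∀ x y, Relation.EqvGen R x y → Relation.EqvGen R' (f x) (f y) := by
  intro x y hxy
  induction hxy with
  | rel p q h' => exact h p q h'
  | refl p => exact Relation.EqvGen.refl _
  | symm p q _ ih => exact Relation.EqvGen.symm _ _ ih
  | trans p q r _ _ ih1 ih2 => exact Relation.EqvGen.trans _ _ _ ih1 ih2

lemma k1_to_Lam2 {m m' : Fin n} (h : lamRel a b m m') :
    Lam2 a b c (Sum.inl m) (Sum.inl m') := by
  refine eqvGen_map Sum.inl ?_ m m' h
  rintro p q (h' | h')
  · exact Relation.EqvGen.rel _ _ (Or.inl h')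
  · exact Relation.EqvGen.rel _ _ (Or.inr h')

lemma lPc_to_Lam2 {k k' : Fin n} (h : lamRel (pmul a b) c k k') :
    Lam2 a b c (Sum.inr k) (Sum.inr k') := by
  refine eqvGen_map Sum.inr ?_ k k' h
  rintro p q (h' | h')
  · have h'' : (pmul a b).r (Sum.inr p) (Sum.inr q) := h'
    rw [Mll] at h''
    rcases h'' with h'' | ⟨m, m', hm, hl, hm'⟩
    · exact Relation.EqvGen.rel _ _ (Or.inl h'')
    · refine Relation.EqvGen.trans _ _ _
        (Relation.EqvGen.symm _ _ (Relation.EqvGen.rel (Sum.inl m) (Sum.inr p) hm)) ?_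
      refine Relation.EqvGen.trans _ _ _ (k1_to_Lam2 hl) ?_
      exact Relation.EqvGen.rel (Sum.inl m') (Sum.inr q) hm'
  · exact Relation.EqvGen.rel _ _ (Or.inr h')

lemma Lam2_le_T2 {u v : Fin n ⊕ Fin n} (h : Lam2 a b c u v) : T2 a b c u v :=
  eqvGen_le (s := T2Setoid a b c) gen2_le_T2 u v h

lemma T2_le_Lam2 {u v : Fin n ⊕ Fin n} (h : T2 a b c u v) : Lam2 a b c u v := by
  cases u with
  | inl m =>
    cases v with
    | inl m' =>
      rcases h with h | ⟨m₂, m₃, k, k', h1, h2, h3, h4, h5⟩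
      · exact k1_to_Lam2 h
      · refine Relation.EqvGen.trans _ _ _ (k1_to_Lam2 h1) ?_
        refine Relation.EqvGen.trans _ _ _ (Relation.EqvGen.rel (Sum.inl m₂) (Sum.inr k) h2) ?_
        refine Relation.EqvGen.trans _ _ _ (lPc_to_Lam2 h3) ?_
        refine Relation.EqvGen.trans _ _ _
          (Relation.EqvGen.symm _ _ (Relation.EqvGen.rel (Sum.inl m₃) (Sum.inr k') h4)) ?_
        exact k1_to_Lam2 h5
    | inr k =>
      obtain ⟨m₂, k', h1, h2, h3⟩ := h
      refine Relation.EqvGen.trans _ _ _ (k1_to_Lam2 h1) ?_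
      refine Relation.EqvGen.trans _ _ _ (Relation.EqvGen.rel (Sum.inl m₂) (Sum.inr k') h2) ?_
      exact lPc_to_Lam2 h3
  | inr k =>
    cases v with
    | inl m =>
      obtain ⟨m₂, k', h1, h2, h3⟩ := h
      refine Relation.EqvGen.symm _ _ ?_
      refine Relation.EqvGen.trans _ _ _ (k1_to_Lam2 h1) ?_
      refine Relation.EqvGen.trans _ _ _ (Relation.EqvGen.rel (Sum.inl m₂) (Sum.inr k') h2) ?_
      exact lPc_to_Lam2 h3
    | inr k' => exact lPc_to_Lam2 h

lemma X2L (k k' : Fin n) : Lam2 a b c (Sum.inr k) (Sum.inr k') ↔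
    lamRel (pmul a b) c k k' :=
  ⟨fun h => Lam2_le_T2 h, fun h => lPc_to_Lam2 h⟩

lemma X1L (m m' : Fin n) : Lam2 a b c (Sum.inl m) (Sum.inl m') ↔ tII a b c m m' :=
  ⟨fun h => Lam2_le_T2 h, fun h => T2_le_Lam2 (u := Sum.inl m) (v := Sum.inl m') h⟩

lemma X3L (m k : Fin n) : Lam2 a b c (Sum.inl m) (Sum.inr k) ↔ tIX a b c m k :=
  ⟨fun h => Lam2_le_T2 h, fun h => T2_le_Lam2 (u := Sum.inl m) (v := Sum.inr k) h⟩

end AssocLeft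

section AssocRight

variable {n : ℕ} {a b c : Ptn n}

def sII (a b c : Ptn n) (m m' : Fin n) : Prop := lamRel a (pmul b c) m m'

def sIX (a b c : Ptn n) (m k : Fin n) : Prop :=
  ∃ m₂ k₂, lamRel a (pmul b c) m m₂ ∧ b.r (Sum.inl m₂) (Sum.inr k₂) ∧ lamRel b c k₂ k

def sXX (a b c : Ptn n) (k k' : Fin n) : Prop :=
  lamRel b c k k' ∨ ∃ k₂ k₃ m m', lamRel b c k k₂ ∧ b.r (Sum.inl m) (Sum.inr k₂) ∧
    lamRel a (pmul b c) m m' ∧ b.r (Sum.inl m') (Sum.inr k₃) ∧ lamRel b c k₃ k'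

def S2 (a b c : Ptn n) : (Fin n ⊕ Fin n) → (Fin n ⊕ Fin n) → Prop
  | Sum.inl m, Sum.inl m' => sII a b c m m'
  | Sum.inl m, Sum.inr k => sIX a b c m k
  | Sum.inr k, Sum.inl m => sIX a b c m k
  | Sum.inr k, Sum.inr k' => sXX a b c k k'

lemma laQ_of_kb {m m' : Fin n} (h : b.r (Sum.inl m) (Sum.inl m')) :
    lamRel a (pmul b c) m m' := by
  apply lam_of_kerb
  show (pmul b c).r (Sum.inl m) (Sum.inl m')
  rw [Mtt]; exact Or.inl h

lemma laQ_absorb {m m' k₂ k₃ : Fin n} (h1 : b.r (Sum.inl m) (Sum.inr k₂))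
    (h2 : lamRel b c k₂ k₃) (h3 : b.r (Sum.inl m') (Sum.inr k₃)) :
    lamRel a (pmul b c) m m' := by
  apply lam_of_kerb
  show (pmul b c).r (Sum.inl m) (Sum.inl m')
  rw [Mtt]; exact Or.inr ⟨k₂, k₃, h1, h2, h3⟩

lemma laQ_of_k1 {m m' : Fin n} (h : lamRel a b m m') : lamRel a (pmul b c) m m' := by
  refine eqvGen_mono ?_ m m' h
  rintro p q (h' | h')
  · exact lam_of_coker h'
  · exact laQ_of_kb h'

lemma S2_refl (u : Fin n ⊕ Fin n) : S2 a b c u u := by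
  cases u with
  | inl m => exact lam_refl m
  | inr k => exact Or.inl (lam_refl k)

lemma S2_symm {u v : Fin n ⊕ Fin n} (h : S2 a b c u v) : S2 a b c v u := by
  cases u with
  | inl m =>
    cases v with
    | inl m' => exact lam_symm h
    | inr k => exact h
  | inr k =>
    cases v with
    | inl m => exact h
    | inr k' =>
      rcases h with h | ⟨k₂, k₃, m, m', h1, h2, h3, h4, h5⟩
      · exact Or.inl (lam_symm h)
      · exact Or.inr ⟨k₃, k₂, m', m, lam_symm h5, h4, lam_symm h3, h2, lam_symm h1⟩

lemma S2_trans {u v w : Fin n ⊕ Fin n} (h : S2 a b c u v) (h' : S2 a b c v w) :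
    S2 a b c u w := by
  cases u with
  | inl m =>
    cases v with
    | inl m' =>
      cases w with
      | inl m'' => exact lam_trans h h'
      | inr k =>
        obtain ⟨m₂, k₂, g1, g2, g3⟩ := h'
        exact ⟨m₂, k₂, lam_trans h g1, g2, g3⟩
    | inr k =>
      cases w with
      | inl m' =>
        obtain ⟨m₂, k₂, h1, h2, h3⟩ := h
        obtain ⟨m₃, k₃, g1, g2, g3⟩ := h'
        exact lam_trans h1 (lam_trans
          (laQ_absorb h2 (lam_trans h3 (lam_symm g3)) g2) (lam_symm g1))
      | inr k' =>
        obtain ⟨m₂, k₂, h1, h2, h3⟩ := h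
        rcases h' with h' | ⟨l₂, l₃, m₄, m₅, g1, g2, g3, g4, g5⟩
        · exact ⟨m₂, k₂, h1, h2, lam_trans h3 h'⟩
        · refine ⟨m₅, l₃, ?_, g4, g5⟩
          exact lam_trans h1 (lam_trans (laQ_absorb h2 (lam_trans h3 g1) g2) g3)
  | inr k =>
    cases v with
    | inl m =>
      cases w with
      | inl m' =>
        obtain ⟨m₂, k₂, h1, h2, h3⟩ := h
        exact ⟨m₂, k₂, lam_trans (lam_symm h') h1, h2, h3⟩
      | inr k' =>
        obtain ⟨m₂, k₂, h1, h2, h3⟩ := h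
        obtain ⟨m₃, k₃, g1, g2, g3⟩ := h'
        exact Or.inr ⟨k₂, k₃, m₂, m₃, lam_symm h3, h2,
          lam_trans (lam_symm h1) g1, g2, g3⟩
    | inr k₀ =>
      cases w with
      | inl m =>
        obtain ⟨m₆, k₆, g1, g2, g3⟩ := h'
        rcases h with h | ⟨k₂, k₃, m₄, m₅, h1, h2, h3, h4, h5⟩
        · exact ⟨m₆, k₆, g1, g2, lam_trans g3 (lam_symm h)⟩
        · refine ⟨m₄, k₂, ?_, h2, lam_symm h1⟩
          exact lam_trans g1 (lam_trans
            (laQ_absorb g2 (lam_trans g3 (lam_symm h5)) h4) (lam_symm h3))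
      | inr k' =>
        rcases h with h | ⟨k₂, k₃, m₄, m₅, h1, h2, h3, h4, h5⟩
        · rcases h' with h' | ⟨l₂, l₃, m₆, m₇, g1, g2, g3, g4, g5⟩
          · exact Or.inl (lam_trans h h')
          · exact Or.inr ⟨l₂, l₃, m₆, m₇, lam_trans h g1, g2, g3, g4, g5⟩
        · rcases h' with h' | ⟨l₂, l₃, m₆, m₇, g1, g2, g3, g4, g5⟩
          · exact Or.inr ⟨k₂, k₃, m₄, m₅, h1, h2, h3, h4, lam_trans h5 h'⟩
          · refine Or.inr ⟨k₂, l₃, m₄, m₇, h1, h2, ?_, g4, g5⟩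
            exact lam_trans h3 (lam_trans (laQ_absorb h4 (lam_trans h5 g1) g2) g3)

def S2Setoid (a b c : Ptn n) : Setoid (Fin n ⊕ Fin n) :=
  ⟨S2 a b c, ⟨S2_refl, S2_symm, S2_trans⟩⟩

lemma gen2_le_S2 : ∀ u v, gen2 a b c u v → S2 a b c u v := by
  rintro (m | k) (m' | k') h
  · rcases h with h | h
    · exact lam_of_coker h
    · exact laQ_of_kb h
  · exact ⟨m, k', lam_refl m, h, lam_refl k'⟩
  · exact ⟨m', k, lam_refl m', h, lam_refl k⟩
  · rcases h with h | h
    · exact Or.inl (lam_of_coker h)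
    · exact Or.inl (lam_of_kerb h)

lemma k2_to_Lam2 {k k' : Fin n} (h : lamRel b c k k') :
    Lam2 a b c (Sum.inr k) (Sum.inr k') := by
  refine eqvGen_map Sum.inr ?_ k k' h
  rintro p q (h' | h')
  · exact Relation.EqvGen.rel _ _ (Or.inl h')
  · exact Relation.EqvGen.rel _ _ (Or.inr h')

lemma laQ_to_Lam2 {m m' : Fin n} (h : lamRel a (pmul b c) m m') :
    Lam2 a b c (Sum.inl m) (Sum.inl m') := by
  refine eqvGen_map Sum.inl ?_ m m' h
  rintro p q (h' | h')
  · exact Relation.EqvGen.rel _ _ (Or.inl h')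
  · have h'' : (pmul b c).r (Sum.inl p) (Sum.inl q) := h'
    rw [Mtt] at h''
    rcases h'' with h'' | ⟨k, k', hk, hl, hk'⟩
    · exact Relation.EqvGen.rel _ _ (Or.inr h'')
    · refine Relation.EqvGen.trans _ _ _ (Relation.EqvGen.rel (Sum.inl p) (Sum.inr k) hk) ?_
      refine Relation.EqvGen.trans _ _ _ (k2_to_Lam2 hl) ?_
      exact Relation.EqvGen.symm _ _ (Relation.EqvGen.rel (Sum.inl q) (Sum.inr k') hk')

lemma Lam2_le_S2 {u v : Fin n ⊕ Fin n} (h : Lam2 a b c u v) : S2 a b c u v :=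
  eqvGen_le (s := S2Setoid a b c) gen2_le_S2 u v h

lemma S2_le_Lam2 {u v : Fin n ⊕ Fin n} (h : S2 a b c u v) : Lam2 a b c u v := by
  cases u with
  | inl m =>
    cases v with
    | inl m' => exact laQ_to_Lam2 h
    | inr k =>
      obtain ⟨m₂, k₂, h1, h2, h3⟩ := h
      refine Relation.EqvGen.trans _ _ _ (laQ_to_Lam2 h1) ?_
      refine Relation.EqvGen.trans _ _ _ (Relation.EqvGen.rel (Sum.inl m₂) (Sum.inr k₂) h2) ?_
      exact k2_to_Lam2 h3
  | inr k =>
    cases v with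
    | inl m =>
      obtain ⟨m₂, k₂, h1, h2, h3⟩ := h
      refine Relation.EqvGen.symm _ _ ?_
      refine Relation.EqvGen.trans _ _ _ (laQ_to_Lam2 h1) ?_
      refine Relation.EqvGen.trans _ _ _ (Relation.EqvGen.rel (Sum.inl m₂) (Sum.inr k₂) h2) ?_
      exact k2_to_Lam2 h3
    | inr k' =>
      rcases h with h | ⟨k₂, k₃, m, m', h1, h2, h3, h4, h5⟩
      · exact k2_to_Lam2 h
      · refine Relation.EqvGen.trans _ _ _ (k2_to_Lam2 h1) ?_
        refine Relation.EqvGen.trans _ _ _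
          (Relation.EqvGen.symm _ _ (Relation.EqvGen.rel (Sum.inl m) (Sum.inr k₂) h2)) ?_
        refine Relation.EqvGen.trans _ _ _ (laQ_to_Lam2 h3) ?_
        refine Relation.EqvGen.trans _ _ _ (Relation.EqvGen.rel (Sum.inl m') (Sum.inr k₃) h4) ?_
        exact k2_to_Lam2 h5

lemma X1R (m m' : Fin n) : Lam2 a b c (Sum.inl m) (Sum.inl m') ↔
    lamRel a (pmul b c) m m' :=
  ⟨fun h => Lam2_le_S2 h, fun h => S2_le_Lam2 (u := Sum.inl m) (v := Sum.inl m') h⟩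

lemma X3R (m k : Fin n) : Lam2 a b c (Sum.inl m) (Sum.inr k) ↔ sIX a b c m k :=
  ⟨fun h => Lam2_le_S2 h, fun h => S2_le_Lam2 (u := Sum.inl m) (v := Sum.inr k) h⟩

lemma X2R (k k' : Fin n) : Lam2 a b c (Sum.inr k) (Sum.inr k') ↔ sXX a b c k k' :=
  ⟨fun h => Lam2_le_S2 h, fun h => S2_le_Lam2 (u := Sum.inr k) (v := Sum.inr k') h⟩

end AssocRight

section AssocMain

variable {n : ℕ}

lemma symm_iff'' {α : Type*} (s : Setoid α) (u v : α) : s.r u v ↔ s.r v u :=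
  ⟨s.symm', s.symm'⟩

lemma pmul_assoc (a b c : Ptn n) : pmul (pmul a b) c = pmul a (pmul b c) := by
  apply Setoid.ext
  have edge12 : ∀ m k : Fin n, b.r (Sum.inl m) (Sum.inr k) →
      Lam2 a b c (Sum.inl m) (Sum.inr k) := fun m k h => Relation.EqvGen.rel _ _ h
  have htt : ∀ x x' : Fin n,
      (pmul (pmul a b) c).r (Sum.inl x) (Sum.inl x') ↔
        (pmul a (pmul b c)).r (Sum.inl x) (Sum.inl x') := by
    intro x x'
    have hR : (pmul a (pmul b c)).r (Sum.inl x) (Sum.inl x') ↔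
        (a.r (Sum.inl x) (Sum.inl x') ∨ ∃ m m', a.r (Sum.inl x) (Sum.inr m) ∧
          Lam2 a b c (Sum.inl m) (Sum.inl m') ∧ a.r (Sum.inl x') (Sum.inr m')) := by
      rw [Mtt]
      constructor
      · rintro (h | ⟨m, m', h1, h2, h3⟩)
        · exact Or.inl h
        · exact Or.inr ⟨m, m', h1, (X1R m m').mpr h2, h3⟩
      · rintro (h | ⟨m, m', h1, h2, h3⟩)
        · exact Or.inl h
        · exact Or.inr ⟨m, m', h1, (X1R m m').mp h2, h3⟩
    rw [hR, Mtt]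
    constructor
    · rintro (h | ⟨k, k', hk, hl, hk'⟩)
      · rw [Mtt] at h
        rcases h with h | ⟨m, m', h1, h2, h3⟩
        · exact Or.inl h
        · exact Or.inr ⟨m, m', h1, k1_to_Lam2 h2, h3⟩
      · rw [Mtl] at hk hk'
        obtain ⟨m, m₂, hxm, hmm₂, hm₂k⟩ := hk
        obtain ⟨m', m₃, hx'm', hm'm₃, hm₃k'⟩ := hk'
        refine Or.inr ⟨m, m', hxm, ?_, hx'm'⟩
        refine Relation.EqvGen.trans _ _ _ (k1_to_Lam2 hmm₂) ?_
        refine Relation.EqvGen.trans _ _ _ (edge12 m₂ k hm₂k) ?_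
        refine Relation.EqvGen.trans _ _ _ (lPc_to_Lam2 hl) ?_
        refine Relation.EqvGen.trans _ _ _
          (Relation.EqvGen.symm _ _ (edge12 m₃ k' hm₃k')) ?_
        exact Relation.EqvGen.symm _ _ (k1_to_Lam2 hm'm₃)
    · rintro (h | ⟨m, m', h1, h2, h3⟩)
      · exact Or.inl ((Mtt x x').mpr (Or.inl h))
      · rcases (X1L m m').mp h2 with hk | ⟨m₂, m₃, k, k', g1, g2, g3, g4, g5⟩
        · exact Or.inl ((Mtt x x').mpr (Or.inr ⟨m, m', h1, hk, h3⟩))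
        · refine Or.inr ⟨k, k', ?_, g3, ?_⟩
          · exact (Mtl x k).mpr ⟨m, m₂, h1, g1, g2⟩
          · exact (Mtl x' k').mpr ⟨m', m₃, h3, lam_symm g5, g4⟩
  have htl : ∀ x y : Fin n,
      (pmul (pmul a b) c).r (Sum.inl x) (Sum.inr y) ↔
        (pmul a (pmul b c)).r (Sum.inl x) (Sum.inr y) := by
    intro x y
    have hcanon : (pmul (pmul a b) c).r (Sum.inl x) (Sum.inr y) ↔
        ∃ m k', a.r (Sum.inl x) (Sum.inr m) ∧ Lam2 a b c (Sum.inl m) (Sum.inr k') ∧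
          c.r (Sum.inl k') (Sum.inr y) := by
      rw [Mtl]
      constructor
      · rintro ⟨k, k', hk, hl, hc'⟩
        rw [Mtl] at hk
        obtain ⟨m, m₂, hxm, hmm₂, hm₂k⟩ := hk
        refine ⟨m, k', hxm, ?_, hc'⟩
        refine Relation.EqvGen.trans _ _ _ (k1_to_Lam2 hmm₂) ?_
        exact Relation.EqvGen.trans _ _ _ (edge12 m₂ k hm₂k) (lPc_to_Lam2 hl)
      · rintro ⟨m, k', hxm, hΛ, hc'⟩
        obtain ⟨m₂, k₂, g1, g2, g3⟩ := (X3L m k').mp hΛ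
        exact ⟨k₂, k', (Mtl x k₂).mpr ⟨m, m₂, hxm, g1, g2⟩, g3, hc'⟩
    rw [hcanon, Mtl]
    constructor
    · rintro ⟨m, k', hxm, hΛ, hc'⟩
      obtain ⟨m₂, k₂, g1, g2, g3⟩ := (X3R m k').mp hΛ
      exact ⟨m, m₂, hxm, g1, (Mtl m₂ y).mpr ⟨k₂, k', g2, g3, hc'⟩⟩
    · rintro ⟨m, m', hxm, hl, hQ⟩
      rw [Mtl] at hQ
      obtain ⟨k, k', hm'k, hkk', hc'⟩ := hQ
      refine ⟨m, k', hxm, ?_, hc'⟩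
      refine Relation.EqvGen.trans _ _ _ (laQ_to_Lam2 hl) ?_
      exact Relation.EqvGen.trans _ _ _ (edge12 m' k hm'k) (k2_to_Lam2 hkk')
  have hll : ∀ y y' : Fin n,
      (pmul (pmul a b) c).r (Sum.inr y) (Sum.inr y') ↔
        (pmul a (pmul b c)).r (Sum.inr y) (Sum.inr y') := by
    intro y y'
    have hcanon : (pmul (pmul a b) c).r (Sum.inr y) (Sum.inr y') ↔
        (c.r (Sum.inr y) (Sum.inr y') ∨ ∃ k k', c.r (Sum.inl k) (Sum.inr y) ∧
          Lam2 a b c (Sum.inr k) (Sum.inr k') ∧ c.r (Sum.inl k') (Sum.inr y')) := by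
      rw [Mll]
      constructor
      · rintro (h | ⟨k, k', h1, h2, h3⟩)
        · exact Or.inl h
        · exact Or.inr ⟨k, k', h1, (X2L k k').mpr h2, h3⟩
      · rintro (h | ⟨k, k', h1, h2, h3⟩)
        · exact Or.inl h
        · exact Or.inr ⟨k, k', h1, (X2L k k').mp h2, h3⟩
    rw [hcanon, Mll]
    constructor
    · rintro (h | ⟨k, k', h1, h2, h3⟩)
      · exact Or.inl ((Mll y y').mpr (Or.inl h))
      · rcases (X2R k k').mp h2 with hk | ⟨k₂, k₃, m, m', g1, g2, g3, g4, g5⟩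
        · exact Or.inl ((Mll y y').mpr (Or.inr ⟨k, k', h1, hk, h3⟩))
        · refine Or.inr ⟨m, m', ?_, g3, ?_⟩
          · exact (Mtl m y).mpr ⟨k₂, k, g2, lam_symm g1, h1⟩
          · exact (Mtl m' y').mpr ⟨k₃, k', g4, g5, h3⟩
    · rintro (h | ⟨m, m', h1, h2, h3⟩)
      · rw [Mll] at h
        rcases h with h | ⟨k, k', h1, h2, h3⟩
        · exact Or.inl h
        · exact Or.inr ⟨k, k', h1, k2_to_Lam2 h2, h3⟩
      · rw [Mtl] at h1 h3
        obtain ⟨k₂, k, hm, hk₂k, hcy⟩ := h1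
        obtain ⟨k₃, k'', hm', hk₃k'', hcy'⟩ := h3
        refine Or.inr ⟨k, k'', hcy, ?_, hcy'⟩
        refine Relation.EqvGen.trans _ _ _ (Relation.EqvGen.symm _ _ (k2_to_Lam2 hk₂k)) ?_
        refine Relation.EqvGen.trans _ _ _ (Relation.EqvGen.symm _ _ (edge12 m k₂ hm)) ?_
        refine Relation.EqvGen.trans _ _ _ (laQ_to_Lam2 h2) ?_
        exact Relation.EqvGen.trans _ _ _ (edge12 m' k₃ hm') (k2_to_Lam2 hk₃k'')
  intro u v
  cases u with
  | inl x =>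
    cases v with
    | inl x' => exact htt x x'
    | inr y => exact htl x y
  | inr y =>
    cases v with
    | inl x =>
      rw [symm_iff'' (pmul (pmul a b) c), symm_iff'' (pmul a (pmul b c))]
      exact htl x y
    | inr y' => exact hll y y'

end AssocMain

section G5G4

variable {n : ℕ} [NeZero n] {a b : Ptn n}

lemma step_lemma (hpa : Planar a) (hpb : Planar b) (hfb : FullDom b) (x : Fin n) :
    anchorBelow (cokerP (pmul a b)) (anchorBelow (cokerP b) x) =
      anchorBelow (cokerP (pmul a b)) x := by
  set ζ := cokerP b
  set ψ := cokerP (pmul a b)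
  have h1 : anchorBelow ψ x ≤ anchorBelow ζ x :=
    le_anchorBelow ζ (phi_anchors_sub (a := a) hpb (anchorBelow_mem ψ x))
      (anchorBelow_le ψ x)
  refine le_antisymm (anchorBelow_mono ψ (anchorBelow_le ζ x)) ?_
  calc anchorBelow ψ x = anchorBelow ψ (anchorBelow ψ x) := (anchorBelow_idem ψ x).symm
    _ ≤ anchorBelow ψ (anchorBelow ζ x) := anchorBelow_mono ψ h1

lemma g5_absorb (hpa : Planar a) (hpb : Planar b) (hfb : FullDom b) :
    pmul (dEta (cokerP b)) (dEta (cokerP (pmul a b))) = dEta (cokerP (pmul a b)) := by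
  set ζ := cokerP b with hζdef
  set ψ := cokerP (pmul a b) with hψdef
  have hζpl : IsPlanarEq ζ := isPlanarEq_cokerP hpb
  have hψpl : IsPlanarEq ψ := isPlanarEq_phi hpa hpb hfb
  have hKR : ∀ m m', lamRel (dEta ζ) (dEta ψ) m m' ↔
      anchorBelow ψ m = anchorBelow ψ m' := by
    refine lam_dEta_right' hψpl ?_
    intro u v h
    exact zeta_le_phi ((dEta_ll ζ u v).mp h)
  have hstep : ∀ x, anchorBelow ψ (anchorBelow ζ x) = anchorBelow ψ x :=
    step_lemma hpa hpb hfb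
  -- reduction: αψ x = αψ m whenever αζ x = μζ m
  have hred : ∀ {x m : Fin n}, anchorBelow ζ x = minCl ζ m →
      anchorBelow ψ x = anchorBelow ψ m := by
    intro x m h1
    have hmem : minCl ζ m ∈ anchorsF ζ := h1 ▸ anchorBelow_mem ζ x
    have hαm : anchorBelow ζ m = minCl ζ m := anchorBelow_eq_minCl hζpl hmem
    calc anchorBelow ψ x = anchorBelow ψ (anchorBelow ζ x) := (hstep x).symm
      _ = anchorBelow ψ (anchorBelow ζ m) := by rw [h1, hαm]
      _ = anchorBelow ψ m := hstep m
  apply Setoid.ext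
  have htl : ∀ x y : Fin n,
      (pmul (dEta ζ) (dEta ψ)).r (Sum.inl x) (Sum.inr y) ↔
        (dEta ψ).r (Sum.inl x) (Sum.inr y) := by
    intro x y
    rw [Mtl, dEta_tl ψ]
    constructor
    · rintro ⟨m, m', h1, h2, h3⟩
      rw [dEta_tl] at h1
      rw [dEta_tl] at h3
      rw [hKR] at h2
      rw [hred h1, h2]
      exact h3
    · intro h
      refine ⟨anchorBelow ζ x, anchorBelow ζ x, ?_, lam_refl _, ?_⟩
      · rw [dEta_tl, minCl_of_anchor ζ (anchorBelow_mem ζ x)]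
      · rw [dEta_tl, hstep x]
        exact h
  intro u v
  cases u with
  | inl x =>
    cases v with
    | inl x' =>
      rw [Mtt, dEta_tt ψ]
      constructor
      · rintro (h | ⟨m, m', h1, h2, h3⟩)
        · have h' : anchorBelow ζ x = anchorBelow ζ x' := h
          rw [← hstep x, h', hstep x']
        · rw [dEta_tl] at h1 h3
          rw [hKR] at h2
          rw [hred h1, h2, ← hred h3]
      · intro h
        refine Or.inr ⟨anchorBelow ζ x, anchorBelow ζ x', ?_, ?_, ?_⟩
        · rw [dEta_tl, minCl_of_anchor ζ (anchorBelow_mem ζ x)]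
        · rw [hKR, hstep x, hstep x']
          exact h
        · rw [dEta_tl, minCl_of_anchor ζ (anchorBelow_mem ζ x')]
    | inr y => exact htl x y
  | inr y =>
    cases v with
    | inl x =>
      rw [symm_iff'' (pmul (dEta ζ) (dEta ψ)), symm_iff'' (dEta ψ)]
      exact htl x y
    | inr y' =>
      rw [Mll, dEta_ll ψ y y']
      constructor
      · rintro (h | ⟨m, m', h1, h2, h3⟩)
        · exact h
        · rw [dEta_tl] at h1 h3
          rw [hKR] at h2
          apply rel_of_minCl_eq ψ
          rw [← h1, h2, h3]
      · intro h
        exact Or.inl h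

/-- G5 : `ρ(ρ(a)ρ(b)) = ρ(a)ρ(b)`. -/
lemma g5 (hpa : Planar a) (hpb : Planar b) :
    rhoP (pmul (rhoP a) (rhoP b)) = pmul (rhoP a) (rhoP b) := by
  set ε := cokerP a with hεdef
  set ζ := cokerP b with hζdef
  have hεpl : IsPlanarEq ε := isPlanarEq_cokerP hpa
  have hζpl : IsPlanarEq ζ := isPlanarEq_cokerP hpb
  have hpe : Planar (dEta ε) := planar_dEta hεpl
  have hpf : Planar (dEta ζ) := planar_dEta hζpl
  have hfe : FullDom (dEta ε) := fullDom_dEta ε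
  have hff : FullDom (dEta ζ) := fullDom_dEta ζ
  show rhoP (pmul (dEta ε) (dEta ζ)) = pmul (dEta ε) (dEta ζ)
  have hg8 := g8 (a := dEta ε) (b := dEta ζ) hfe hpe hff hpf
  rw [rhoP_dEta ε] at hg8
  have habs := g5_absorb (a := dEta ε) (b := dEta ζ) hpe hpf hff
  rw [cokerP_dEta ζ] at habs
  have hg8' : pmul (dEta ε) (dEta ζ) =
      pmul (dEta ζ) (dEta (cokerP (pmul (dEta ε) (dEta ζ)))) := hg8
  show dEta (cokerP (pmul (dEta ε) (dEta ζ))) = pmul (dEta ε) (dEta ζ)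
  exact (hg8'.trans habs).symm

/-- G4 : `ρ(a)ρ(b)ρ(a) = ρ(b)ρ(a)`. -/
lemma g4 (hfa : FullDom a) (hpa : Planar a) (hfb : FullDom b) (hpb : Planar b) :
    pmul (pmul (rhoP a) (rhoP b)) (rhoP a) = pmul (rhoP b) (rhoP a) := by
  have hεpl : IsPlanarEq (cokerP a) := isPlanarEq_cokerP hpa
  have hpe : Planar (rhoP a) := planar_dEta hεpl
  have hfe : FullDom (rhoP a) := fullDom_dEta _
  have hg8 := g8 (a := b) (b := rhoP a) hfb hpb hfe hpe
  calc pmul (pmul (rhoP a) (rhoP b)) (rhoP a)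
      = pmul (rhoP a) (pmul (rhoP b) (rhoP a)) := pmul_assoc _ _ _
    _ = pmul (rhoP a) (pmul (rhoP a) (rhoP (pmul b (rhoP a)))) := by rw [hg8]
    _ = pmul (pmul (rhoP a) (rhoP a)) (rhoP (pmul b (rhoP a))) := (pmul_assoc _ _ _).symm
    _ = pmul (rhoP a) (rhoP (pmul b (rhoP a))) := by
        have hid : pmul (rhoP a) (rhoP a) = rhoP a := dEta_idem hεpl
        rw [hid]
    _ = pmul (rhoP b) (rhoP a) := hg8.symm

end G5G4


/-- Proposition `prop:grrac`.  `PP_n^fd`, with the unary operation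
`ρ(a) = d_{coker a}` (taking values in `D_n`), satisfies the grrac-monoid identities
(G1)–(G8). -/
theorem stmt19 (n : ℕ) (hn : 2 ≤ n) [NeZero n] :
    ∀ a ∈ PPfd n, ∀ b ∈ PPfd n,
      rhoP a ∈ DSet n ∧
      pmul a (rhoP a) = a ∧
      rhoP (rhoP a) = rhoP a ∧
      pmul (rhoP a) (rhoP a) = rhoP a ∧
      pmul (pmul (rhoP a) (rhoP b)) (rhoP a) = pmul (rhoP b) (rhoP a) ∧
      rhoP (pmul (rhoP a) (rhoP b)) = pmul (rhoP a) (rhoP b) ∧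
      pmul (rhoP (pmul a b)) (rhoP b) = rhoP (pmul a b) ∧
      rhoP (pmul a b) = rhoP (pmul (rhoP a) b) ∧
      pmul (rhoP a) b = pmul b (rhoP (pmul a b)) := by
  rintro a ⟨hfa, hpa⟩ b ⟨hfb, hpb⟩
  refine ⟨⟨cokerP a, isPlanarEq_cokerP hpa, rfl⟩, g1 hfa hpa, g2 a,
    dEta_idem (isPlanarEq_cokerP hpa), g4 hfa hpa hfb hpb, g5 hpa hpb,
    g6 hpb, g7 a b, g8 hfa hpa hfb hpb⟩

end PaperFDP
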